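/- arXiv:1609.07274 — 6 statements merged into one kernel-verified Lean document; each statement's English description precedes it below -/
import Mathlib

section
/- Let R be a finite non-commutative ring of order n with Z(R) = {0}. Then γ(Γ(R)) + γ(Γ̄(R)) = n if and only if R is isomorphic to E or to F (in particular n = 4). -/
open scoped Classical

noncomputable section

/-- The commuting graph of a (non-unital, possibly non-commutative) ring `R`:
vertices are the non-central elements, and two distinct vertices are adjacent
iff they commute. -/
def commutingGraph (R : Type*) [NonUnitalRing R] :
    SimpleGraph {x : R // x ∉ Set.center R} where
  Adj a b := a ≠ b ∧ (a : R) * b = (b : R) * a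
  symm := ⟨by rintro a b ⟨h1, h2⟩; exact ⟨h1.symm, h2.symm⟩⟩
  loopless := ⟨by rintro a ⟨h, -⟩; exact h rfl⟩

/-- A dominating set: every vertex not in `D` is adjacent to some vertex of `D`. -/
def SimpleGraph.IsDominatingSet {V : Type*} (G : SimpleGraph V) (D : Finset V) : Prop :=
  ∀ v, v ∉ D → ∃ u ∈ D, G.Adj u v

/-- The domination number: the minimum cardinality of a dominating set. -/
noncomputable def SimpleGraph.dominationNumber {V : Type*} [Fintype V] (G : SimpleGraph V) : ℕ :=
  sInf {n | ∃ D : Finset V, G.IsDominatingSet D ∧ D.card = n}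

/-- The signed domination number: the minimum total weight of a function
`f : V → {-1, 1}` whose sum over every closed neighbourhood is at least `1`. -/
noncomputable def SimpleGraph.signedDominationNumber {V : Type*} [Fintype V]
    (G : SimpleGraph V) : ℤ :=
  sInf {w : ℤ | ∃ f : V → ℤ, (∀ v, f v = 1 ∨ f v = -1) ∧
    (∀ v : V, 1 ≤ ∑ u ∈ Finset.univ.filter (fun u => G.Adj v u ∨ u = v), f u) ∧
    w = ∑ v, f v}

/-- Underlying type of the ring `E`. -/
def Ering : Type := ZMod 2 × ZMod 2

instance : Fintype Ering := inferInstanceAs (Fintype (ZMod 2 × ZMod 2))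
instance : DecidableEq Ering := inferInstanceAs (DecidableEq (ZMod 2 × ZMod 2))
instance : AddCommGroup Ering := inferInstanceAs (AddCommGroup (ZMod 2 × ZMod 2))
instance : Mul Ering := ⟨fun a b => (b.1 * a.1, b.1 * a.2)⟩

/-- `E = ⟨x,y : 2x=2y=0, x²=x, y²=y, xy=x, yx=y⟩`, realized on `ZMod 2 × ZMod 2`
with `x = (1,0)`, `y = (1,1)` and multiplication `a * b = (b₁a₁, b₁a₂)`. -/
instance : NonUnitalRing Ering :=
  { (inferInstance : AddCommGroup Ering), (inferInstance : Mul Ering) with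
    left_distrib := by decide
    right_distrib := by decide
    zero_mul := by decide
    mul_zero := by decide
    mul_assoc := by decide }

/-- Underlying type of the ring `F`. -/
def Fring : Type := ZMod 2 × ZMod 2

instance : Fintype Fring := inferInstanceAs (Fintype (ZMod 2 × ZMod 2))
instance : DecidableEq Fring := inferInstanceAs (DecidableEq (ZMod 2 × ZMod 2))
instance : AddCommGroup Fring := inferInstanceAs (AddCommGroup (ZMod 2 × ZMod 2))
instance : Mul Fring := ⟨fun a b => (a.1 * b.1, a.1 * b.2)⟩

/-- `F = ⟨x,y : 2x=2y=0, x²=x, y²=y, xy=y, yx=x⟩`, realized on `ZMod 2 × ZMod 2`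
with `x = (1,0)`, `y = (1,1)` and multiplication `a * b = (a₁b₁, a₁b₂)`. -/
instance : NonUnitalRing Fring :=
  { (inferInstance : AddCommGroup Fring), (inferInstance : Mul Fring) with
    left_distrib := by decide
    right_distrib := by decide
    zero_mul := by decide
    mul_zero := by decide
    mul_assoc := by decide }

/-! ### Auxiliary graph lemmas -/

set_option linter.unusedSectionVars false

namespace SimpleGraph
variable {V : Type*} [Fintype V] [DecidableEq V] (G : SimpleGraph V)

lemma univ_dominating' : G.IsDominatingSet Finset.univ := by
  intro v hv; exact absurd (Finset.mem_univ v) hv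

lemma domSet_nonempty' : {n | ∃ D : Finset V, G.IsDominatingSet D ∧ D.card = n}.Nonempty :=
  ⟨_, Finset.univ, G.univ_dominating', rfl⟩

lemma dominationNumber_le' {D : Finset V} (hD : G.IsDominatingSet D) :
    G.dominationNumber ≤ D.card := Nat.sInf_le ⟨D, hD, rfl⟩

lemma exists_min_dominating' :
    ∃ D : Finset V, G.IsDominatingSet D ∧ D.card = G.dominationNumber :=
  Nat.sInf_mem G.domSet_nonempty'

/-- if G has an edge, γ ≤ m - 1 -/
lemma dominationNumber_le_of_edge' {x y : V} (h : G.Adj x y) :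
    G.dominationNumber ≤ Fintype.card V - 1 := by
  have : G.IsDominatingSet (Finset.univ.erase y) := by
    intro v hv
    have hvy : v = y := by
      by_contra hne
      exact hv (Finset.mem_erase.2 ⟨hne, Finset.mem_univ v⟩)
    exact ⟨x, Finset.mem_erase.2 ⟨fun hxy => G.loopless.irrefl y (hxy ▸ h), Finset.mem_univ x⟩, hvy ▸ h⟩
  calc G.dominationNumber ≤ _ := G.dominationNumber_le' this
    _ = Fintype.card V - 1 := by
        rw [Finset.card_erase_of_mem (Finset.mem_univ y), Finset.card_univ]

/-- isolated vertex in G dominates the complement -/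
lemma compl_dominationNumber_le_one' {v : V} (h : ∀ u, ¬ G.Adj v u) :
    Gᶜ.dominationNumber ≤ 1 := by
  have hd : Gᶜ.IsDominatingSet {v} := by
    intro u hu
    refine ⟨v, Finset.mem_singleton_self v, ?_⟩
    have hne : v ≠ u := fun h' => hu (h' ▸ Finset.mem_singleton_self v)
    exact ⟨hne, h u⟩
  simpa using dominationNumber_le' Gᶜ hd

/-- Ore: no isolated vertices → 2γ ≤ m -/
lemma two_mul_dominationNumber_le' (h : ∀ v : V, ∃ u, G.Adj v u) :
    2 * G.dominationNumber ≤ Fintype.card V := by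
  obtain ⟨D, hD, hcard⟩ := G.exists_min_dominating'
  have hcompl : G.IsDominatingSet Dᶜ := by
    intro v hv
    have hvD : v ∈ D := by simpa using hv
    have herase : ¬ G.IsDominatingSet (D.erase v) := by
      intro hd
      have h1 := G.dominationNumber_le' hd
      rw [Finset.card_erase_of_mem hvD, hcard] at h1
      have h2 : 1 ≤ D.card := Finset.card_pos.2 ⟨v, hvD⟩
      omega
    rw [IsDominatingSet] at herase
    push_neg at herase
    obtain ⟨w, hw, hwno⟩ := herase
    by_cases hwv : w = v
    · subst hwv
      obtain ⟨u, hu⟩ := h w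
      refine ⟨u, ?_, hu.symm⟩
      simp only [Finset.mem_compl]
      intro huD
      exact hwno u (Finset.mem_erase.2 ⟨hu.ne', huD⟩) hu.symm
    · have hwD : w ∉ D := fun hwD => hw (Finset.mem_erase.2 ⟨hwv, hwD⟩)
      obtain ⟨d, hdD, hdw⟩ := hD w hwD
      have hdv : d = v := by
        by_contra hne
        exact hwno d (Finset.mem_erase.2 ⟨hne, hdD⟩) hdw
      subst hdv
      exact ⟨w, by simpa using hwD, hdw.symm⟩
  have h1 := G.dominationNumber_le' hcompl
  rw [Finset.card_compl, hcard] at h1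
  have h2 : G.dominationNumber ≤ Fintype.card V := by
    simpa using G.dominationNumber_le' G.univ_dominating'
  omega

/-- edgeless graph: γ = |V| -/
lemma dominationNumber_of_edgeless' (hE : ∀ a b : V, ¬ G.Adj a b) :
    G.dominationNumber = Fintype.card V := by
  obtain ⟨D, hD, hc⟩ := G.exists_min_dominating'
  have : D = Finset.univ := by
    apply Finset.eq_univ_iff_forall.2
    intro v
    by_contra hv
    obtain ⟨u, _, hadj⟩ := hD v hv
    exact hE u v hadj
  rw [← hc, this, Finset.card_univ]

/-- complement of edgeless graph: γ = 1 -/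
lemma compl_dominationNumber_of_edgeless' (hE : ∀ a b : V, ¬ G.Adj a b) (v0 : V) :
    Gᶜ.dominationNumber = 1 := by
  have hle := G.compl_dominationNumber_le_one' (hE v0)
  have hge : 1 ≤ Gᶜ.dominationNumber := by
    by_contra hlt
    have h0 : Gᶜ.dominationNumber = 0 := by omega
    obtain ⟨D, hD, hc⟩ := Gᶜ.exists_min_dominating'
    rw [h0, Finset.card_eq_zero] at hc
    subst hc
    obtain ⟨u, hu, -⟩ := hD v0 (Finset.notMem_empty v0)
    exact Finset.notMem_empty u hu
  omega

end SimpleGraph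

/-! ### Auxiliary ring lemmas -/

section RingPart
variable {R : Type*} [NonUnitalRing R] [Fintype R]

private lemma iso_F' (e u : R) (he : e * e = e) (heu : e * u = u) (hue : u * e = 0)
    (huu : u * u = 0) (he0 : e ≠ 0) (hu0 : u ≠ 0)
    (h2 : ∀ x : R, x + x = 0)
    (hall : ∀ x : R, x = 0 ∨ x = e ∨ x = u ∨ x = e + u) :
    Nonempty (R ≃+* Fring) := by
  have heu' : e ≠ u := by
    rintro rfl; rw [he] at hue; exact he0 hue
  have heu0 : e + u ≠ 0 := by
    intro h
    exact heu' (by rw [show e = (e + u) + u from by rw [add_assoc, h2, add_zero], h, zero_add])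
  have heue : e + u ≠ e := by
    intro h
    exact hu0 (by rw [show u = e + (e + u) from by rw [← add_assoc, h2, zero_add], h, h2])
  have heuu : e + u ≠ u := by
    intro h
    exact he0 (by rw [show e = (e + u) + u from by rw [add_assoc, h2, add_zero], h, h2])
  let g : Fring → R := fun p =>
    if p = (1, 0) then e else if p = (0, 1) then u else if p = (1, 1) then e + u else 0
  have hz2 : ∀ p : Fring, p = (0,0) ∨ p = (1,0) ∨ p = (0,1) ∨ p = (1,1) := by
    intro p; rcases p with ⟨a, b⟩; fin_cases a <;> fin_cases b
    exacts [Or.inl rfl, Or.inr (Or.inr (Or.inl rfl)), Or.inr (Or.inl rfl), Or.inr (Or.inr (Or.inr rfl))]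
  have hg00 : g (0,0) = 0 := by
    exact (if_neg (fun h => zero_ne_one (α := ZMod 2) (congrArg Prod.fst h))).trans
      ((if_neg (fun h => zero_ne_one (α := ZMod 2) (congrArg Prod.snd h))).trans
      (if_neg (fun h => zero_ne_one (α := ZMod 2) (congrArg Prod.fst h))))
  have hg10 : g (1,0) = e := if_pos rfl
  have hg01 : g (0,1) = u := (if_neg (fun h => zero_ne_one (α := ZMod 2) (congrArg Prod.fst h))).trans (if_pos rfl)
  have hg11 : g (1,1) = e + u := by
    exact (if_neg (fun h => one_ne_zero (α := ZMod 2) (congrArg Prod.snd h))).trans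
      ((if_neg (fun h => one_ne_zero (α := ZMod 2) (congrArg Prod.fst h))).trans (if_pos rfl))
  have padd : ∀ p q : Fring, p + q = (p.1 + q.1, p.2 + q.2) := fun p q => rfl
  have pmul : ∀ p q : Fring, p * q = (p.1 * q.1, p.1 * q.2) := fun p q => rfl
  have z00 : (0+0 : ZMod 2) = 0 := by decide
  have z01 : (0+1 : ZMod 2) = 1 := by decide
  have z10 : (1+0 : ZMod 2) = 1 := by decide
  have z11 : (1+1 : ZMod 2) = 0 := by decide
  have m00 : (0*0 : ZMod 2) = 0 := by decide
  have m01 : (0*1 : ZMod 2) = 0 := by decide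
  have m10 : (1*0 : ZMod 2) = 0 := by decide
  have m11 : (1*1 : ZMod 2) = 1 := by decide
  have gadd : ∀ p q : Fring, g (p + q) = g (p.1 + q.1, p.2 + q.2) := fun p q => rfl
  have gmul : ∀ p q : Fring, g (p * q) = g (p.1 * q.1, p.1 * q.2) := fun p q => rfl
  have hadd : ∀ p q : Fring, g (p + q) = g p + g q := by
    intro p q
    rw [gadd]
    rcases hz2 p with rfl|rfl|rfl|rfl <;> rcases hz2 q with rfl|rfl|rfl|rfl <;>
      simp only [padd, z00, z01, z10, z11, hg00, hg10, hg01, hg11] <;>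
      first
      | rfl
      | simp
      | (abel_nf; try simp [two_nsmul, two_zsmul, h2])
  have hmul : ∀ p q : Fring, g (p * q) = g p * g q := by
    intro p q
    rw [gmul]
    rcases hz2 p with rfl|rfl|rfl|rfl <;> rcases hz2 q with rfl|rfl|rfl|rfl <;>
      simp only [pmul, m00, m01, m10, m11, hg00, hg10, hg01, hg11,
        mul_add, add_mul, he, heu, hue, huu, add_zero, zero_add, mul_zero, zero_mul] <;>
      first
      | rfl
      | simp
      | (abel_nf; try simp [two_nsmul, two_zsmul, h2])
  have huniv : (Finset.univ : Finset R) = {0, e, u, e + u} := by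
    ext x
    simpa using hall x
  have hcardR : Fintype.card R = 4 := by
    rw [← Finset.card_univ, huniv]
    rw [Finset.card_insert_of_notMem (by simp [he0.symm, hu0.symm, heu0.symm]),
      Finset.card_insert_of_notMem (by simp [heu', heue.symm]),
      Finset.card_insert_of_notMem (by simp [heuu.symm]), Finset.card_singleton]
  have hsurj : Function.Surjective g := by
    intro x
    rcases hall x with rfl|rfl|rfl|rfl
    exacts [⟨(0,0), hg00⟩, ⟨(1,0), hg10⟩, ⟨(0,1), hg01⟩, ⟨(1,1), hg11⟩]
  have hbij : Function.Bijective g :=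
    (Fintype.bijective_iff_surjective_and_card g).2 ⟨hsurj, by rw [hcardR]; rfl⟩
  let gh : Fring →ₙ+* R :=
    { toFun := g, map_add' := hadd, map_mul' := hmul,
      map_zero' := hg00 }
  exact ⟨(RingEquiv.ofBijective gh hbij).symm⟩

private lemma iso_E' (e v : R) (he : e * e = e) (hev : e * v = 0) (hve : v * e = v)
    (hvv : v * v = 0) (he0 : e ≠ 0) (hv0 : v ≠ 0)
    (h2 : ∀ x : R, x + x = 0)
    (hall : ∀ x : R, x = 0 ∨ x = e ∨ x = v ∨ x = e + v) :
    Nonempty (R ≃+* Ering) := by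
  have heu' : e ≠ v := by
    rintro rfl; rw [he] at hev; exact he0 hev
  have heu0 : e + v ≠ 0 := by
    intro h
    exact heu' (by rw [show e = (e + v) + v from by rw [add_assoc, h2, add_zero], h, zero_add])
  have heue : e + v ≠ e := by
    intro h
    exact hv0 (by rw [show v = e + (e + v) from by rw [← add_assoc, h2, zero_add], h, h2])
  have heuu : e + v ≠ v := by
    intro h
    exact he0 (by rw [show e = (e + v) + v from by rw [add_assoc, h2, add_zero], h, h2])
  let g : Ering → R := fun p =>
    if p = (1, 0) then e else if p = (0, 1) then v else if p = (1, 1) then e + v else 0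
  have hz2 : ∀ p : Ering, p = (0,0) ∨ p = (1,0) ∨ p = (0,1) ∨ p = (1,1) := by
    intro p; rcases p with ⟨a, b⟩; fin_cases a <;> fin_cases b
    exacts [Or.inl rfl, Or.inr (Or.inr (Or.inl rfl)), Or.inr (Or.inl rfl), Or.inr (Or.inr (Or.inr rfl))]
  have hg00 : g (0,0) = 0 := by
    exact (if_neg (fun h => zero_ne_one (α := ZMod 2) (congrArg Prod.fst h))).trans
      ((if_neg (fun h => zero_ne_one (α := ZMod 2) (congrArg Prod.snd h))).trans
      (if_neg (fun h => zero_ne_one (α := ZMod 2) (congrArg Prod.fst h))))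
  have hg10 : g (1,0) = e := if_pos rfl
  have hg01 : g (0,1) = v := (if_neg (fun h => zero_ne_one (α := ZMod 2) (congrArg Prod.fst h))).trans (if_pos rfl)
  have hg11 : g (1,1) = e + v := by
    exact (if_neg (fun h => one_ne_zero (α := ZMod 2) (congrArg Prod.snd h))).trans
      ((if_neg (fun h => one_ne_zero (α := ZMod 2) (congrArg Prod.fst h))).trans (if_pos rfl))
  have padd : ∀ p q : Ering, p + q = (p.1 + q.1, p.2 + q.2) := fun p q => rfl
  have pmul : ∀ p q : Ering, p * q = (q.1 * p.1, q.1 * p.2) := fun p q => rfl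
  have z00 : (0+0 : ZMod 2) = 0 := by decide
  have z01 : (0+1 : ZMod 2) = 1 := by decide
  have z10 : (1+0 : ZMod 2) = 1 := by decide
  have z11 : (1+1 : ZMod 2) = 0 := by decide
  have m00 : (0*0 : ZMod 2) = 0 := by decide
  have m01 : (0*1 : ZMod 2) = 0 := by decide
  have m10 : (1*0 : ZMod 2) = 0 := by decide
  have m11 : (1*1 : ZMod 2) = 1 := by decide
  have gadd : ∀ p q : Ering, g (p + q) = g (p.1 + q.1, p.2 + q.2) := fun p q => rfl
  have gmul : ∀ p q : Ering, g (p * q) = g (q.1 * p.1, q.1 * p.2) := fun p q => rfl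
  have hadd : ∀ p q : Ering, g (p + q) = g p + g q := by
    intro p q
    rw [gadd]
    rcases hz2 p with rfl|rfl|rfl|rfl <;> rcases hz2 q with rfl|rfl|rfl|rfl <;>
      simp only [padd, z00, z01, z10, z11, hg00, hg10, hg01, hg11] <;>
      first
      | rfl
      | simp
      | (abel_nf; try simp [two_nsmul, two_zsmul, h2])
  have hmul : ∀ p q : Ering, g (p * q) = g p * g q := by
    intro p q
    rw [gmul]
    rcases hz2 p with rfl|rfl|rfl|rfl <;> rcases hz2 q with rfl|rfl|rfl|rfl <;>
      simp only [pmul, m00, m01, m10, m11, hg00, hg10, hg01, hg11,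
        mul_add, add_mul, he, hev, hve, hvv, add_zero, zero_add, mul_zero, zero_mul] <;>
      first
      | rfl
      | simp
      | (abel_nf; try simp [two_nsmul, two_zsmul, h2])
  have huniv : (Finset.univ : Finset R) = {0, e, v, e + v} := by
    ext x
    simpa using hall x
  have hcardR : Fintype.card R = 4 := by
    rw [← Finset.card_univ, huniv]
    rw [Finset.card_insert_of_notMem (by simp [he0.symm, hv0.symm, heu0.symm]),
      Finset.card_insert_of_notMem (by simp [heu', heue.symm]),
      Finset.card_insert_of_notMem (by simp [heuu.symm]), Finset.card_singleton]
  have hsurj : Function.Surjective g := by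
    intro x
    rcases hall x with rfl|rfl|rfl|rfl
    exacts [⟨(0,0), hg00⟩, ⟨(1,0), hg10⟩, ⟨(0,1), hg01⟩, ⟨(1,1), hg11⟩]
  have hbij : Function.Bijective g :=
    (Fintype.bijective_iff_surjective_and_card g).2 ⟨hsurj, by rw [hcardR]; rfl⟩
  let gh : Ering →ₙ+* R :=
    { toFun := g, map_add' := hadd, map_mul' := hmul,
      map_zero' := hg00 }
  exact ⟨(RingEquiv.ofBijective gh hbij).symm⟩

/-- main ring classification -/
private lemma ring_classify' (hnc : ∃ x y : R, x * y ≠ y * x)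
    (H : ∀ x y : R, x * y = y * x → x = 0 ∨ y = 0 ∨ x = y) :
    Nonempty (R ≃+* Ering) ∨ Nonempty (R ≃+* Fring) := by
  -- characteristic 2
  have h2 : ∀ x : R, x + x = 0 := by
    intro x
    rcases H (-x) x (by rw [neg_mul, mul_neg]) with h|h|h
    · rw [neg_eq_zero.mp h, add_zero]
    · rw [h, add_zero]
    · exact neg_eq_iff_add_eq_zero.mp h
  have hcancel : ∀ a b : R, a + b = 0 → a = b := by
    intro a b hab
    rw [← add_zero a, ← h2 b, ← add_assoc, hab, zero_add]
  -- squares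
  have hsq : ∀ x : R, x * x = 0 ∨ x * x = x := by
    intro x
    rcases H (x*x) x (mul_assoc x x x) with h|h|h
    · exact Or.inl h
    · exact Or.inl (by rw [h, mul_zero])
    · exact Or.inr h
  -- idempotent exists
  have hid : ∃ e : R, e ≠ 0 ∧ e * e = e := by
    by_contra hno
    push_neg at hno
    have hsq0 : ∀ x : R, x * x = 0 := by
      intro x
      rcases eq_or_ne x 0 with rfl|hx
      · rw [mul_zero]
      rcases hsq x with h|h
      · exact h
      · exact absurd h (hno x hx)
    have hcomm : ∀ x y : R, x * y = y * x := by
      intro x y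
      have h1 := hsq0 (x+y)
      rw [add_mul, mul_add, mul_add, hsq0 x, hsq0 y, zero_add, add_zero] at h1
      exact hcancel _ _ h1
    obtain ⟨x, y, hxy⟩ := hnc
    exact hxy (hcomm x y)
  obtain ⟨e, he0, he⟩ := hid
  -- e (x e) is 0 or e
  have l1 : ∀ x : R, (e*(x*e))*e = e*(x*e) := by
    intro x; rw [mul_assoc, mul_assoc, he]
  have l2 : ∀ x : R, e*(e*(x*e)) = e*(x*e) := by
    intro x; rw [← mul_assoc, he]
  have ha : ∀ x : R, e*(x*e) = 0 ∨ e*(x*e) = e := by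
    intro x
    rcases H (e*(x*e)) e ((l1 x).trans (l2 x).symm) with h|h|h
    · exact Or.inl h
    · exact absurd h he0
    · exact Or.inr h
  -- B and C parts
  have hb1 : ∀ x : R, e * (e*x + e*(x*e)) = e*x + e*(x*e) := by
    intro x; rw [mul_add, ← mul_assoc, he, l2]
  have hb2 : ∀ x : R, (e*x + e*(x*e)) * e = 0 := by
    intro x; rw [add_mul, mul_assoc, l1, h2]
  have hc1 : ∀ x : R, (x*e + e*(x*e)) * e = x*e + e*(x*e) := by
    intro x; rw [add_mul, mul_assoc x e e, he, l1]
  have hc2 : ∀ x : R, e * (x*e + e*(x*e)) = 0 := by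
    intro x; rw [mul_add, l2, h2]
  -- d part vanishes
  have hd0 : ∀ x : R, x + e*x + x*e + e*(x*e) = 0 := by
    intro x
    have hd1 : e * (x + e*x + x*e + e*(x*e)) = 0 := by
      rw [mul_add, mul_add, mul_add, ← mul_assoc, he, l2]
      abel_nf
      simp [two_nsmul, two_zsmul, h2]
    have hd2 : (x + e*x + x*e + e*(x*e)) * e = 0 := by
      rw [add_mul, add_mul, add_mul, mul_assoc x e e, he, mul_assoc e x e, l1]
      abel_nf
      simp [two_nsmul, two_zsmul, h2]
    rcases H (x + e*x + x*e + e*(x*e)) e (hd2.trans hd1.symm) with h|h|h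
    · exact h
    · exact absurd h he0
    · exfalso
      rw [h, he] at hd1
      exact he0 hd1
  -- the decomposition x = e*x + (x*e + e*(x*e))
  have hdec : ∀ x : R, x = e*x + (x*e + e*(x*e)) := by
    intro x
    apply hcancel
    rw [← add_assoc, ← add_assoc]
    exact hd0 x
  -- and e*x = (e*x + e*(x*e)) + e*(x*e)
  have hdec2 : ∀ x : R, e*x = (e*x + e*(x*e)) + e*(x*e) := by
    intro x
    rw [add_assoc, h2, add_zero]
  by_cases hB : ∃ u : R, u ≠ 0 ∧ e*u = u ∧ u*e = 0
  · -- F case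
    right
    obtain ⟨u, hu0, heu, hue⟩ := hB
    have huu : u * u = 0 := by
      calc u*u = u*(e*u) := by rw [heu]
        _ = (u*e)*u := (mul_assoc u e u).symm
        _ = 0 := by rw [hue, zero_mul]
    -- C part is trivial
    have hC0 : ∀ w : R, e*w = 0 → w*e = w → w = 0 := by
      intro w hew hwe
      by_contra hw0
      have hwu0 : w * u = 0 := by
        have hc : (w*u)*e = e*(w*u) := by
          rw [mul_assoc, hue, mul_zero, ← mul_assoc, hew, zero_mul]
        rcases H (w*u) e hc with h|h|h
        · exact h
        · exact absurd h he0
        · exfalso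
          have : e*(w*u) = 0 := by rw [← mul_assoc, hew, zero_mul]
          rw [h, he] at this
          exact he0 this
      have huw : u*w = 0 ∨ u*w = e := by
        have c1 : e*(u*w) = u*w := by rw [← mul_assoc, heu]
        have c2 : (u*w)*e = u*w := by rw [mul_assoc, hwe]
        rcases H (u*w) e (c2.trans c1.symm) with h|h|h
        · exact Or.inl h
        · exact absurd h he0
        · exact Or.inr h
      have hune : u ≠ w := by
        intro h
        apply hu0
        rw [← heu, h, hew]
      rcases huw with h|h
      · rcases H u w (h.trans hwu0.symm) with h'|h'|h'
        · exact hu0 h'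
        · exact hw0 h'
        · exact hune h'
      · -- u*w = e, consider u + w
        have hsq' : (u+w)*(u+w) = e := by
          rw [add_mul, mul_add, mul_add, huu, hwu0]
          have hww : w*w = 0 := by
            calc w*w = (w*e)*w := by rw [hwe]
              _ = w*(e*w) := mul_assoc w e w
              _ = 0 := by rw [hew, mul_zero]
          rw [hww, h, zero_add, add_zero, add_zero]
        have h3 : (u+w)*e = e*(u+w) := by
          rw [← hsq']
          exact ((mul_assoc (u+w) (u+w) (u+w))).symm
        rw [add_mul, hue, hwe, zero_add, mul_add, heu, hew, add_zero] at h3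
        exact hune (h3.symm)
    -- b part is 0 or u
    have hBu : ∀ w : R, e*w = w → w*e = 0 → w = 0 ∨ w = u := by
      intro w hew hwe
      have hwu : w*u = 0 := by
        calc w*u = w*(e*u) := by rw [heu]
          _ = (w*e)*u := (mul_assoc w e u).symm
          _ = 0 := by rw [hwe, zero_mul]
      have huw : u*w = 0 := by
        calc u*w = u*(e*w) := by rw [hew]
          _ = (u*e)*w := (mul_assoc u e w).symm
          _ = 0 := by rw [hue, zero_mul]
      rcases H w u (hwu.trans huw.symm) with h|h|h
      · exact Or.inl h
      · exact absurd h hu0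
      · exact Or.inr h
    -- classify all elements
    have hall : ∀ x : R, x = 0 ∨ x = e ∨ x = u ∨ x = e + u := by
      intro x
      have hcx : x*e + e*(x*e) = 0 := hC0 _ (hc2 x) (hc1 x)
      have hx : x = e*x := by
        have h := hdec x
        rw [hcx, add_zero] at h
        exact h
      have hx2 : x = (e*x + e*(x*e)) + e*(x*e) := hx.trans (hdec2 x)
      rcases hBu _ (hb1 x) (hb2 x) with hb|hb <;> rcases ha x with ha'|ha' <;>
        rw [hb, ha'] at hx2
      · exact Or.inl (by rw [add_zero] at hx2; exact hx2)
      · exact Or.inr (Or.inl (by rw [zero_add] at hx2; exact hx2))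
      · exact Or.inr (Or.inr (Or.inl (by rw [add_zero] at hx2; exact hx2)))
      · exact Or.inr (Or.inr (Or.inr (by rw [add_comm] at hx2; exact hx2)))
    exact iso_F' e u he heu hue huu he0 hu0 h2 hall
  · -- B part always trivial
    push_neg at hB
    have hB0 : ∀ w : R, e*w = w → w*e = 0 → w = 0 := by
      intro w hew hwe
      by_contra hw0
      exact (hB w hw0 hew) hwe
    by_cases hC : ∃ v : R, v ≠ 0 ∧ e*v = 0 ∧ v*e = v
    · -- E case
      left
      obtain ⟨v, hv0, hev, hve⟩ := hC
      have hvv : v * v = 0 := by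
        calc v*v = (v*e)*v := by rw [hve]
          _ = v*(e*v) := mul_assoc v e v
          _ = 0 := by rw [hev, mul_zero]
      have hCv : ∀ w : R, e*w = 0 → w*e = w → w = 0 ∨ w = v := by
        intro w hew hwe
        have hwv : w*v = 0 := by
          calc w*v = (w*e)*v := by rw [hwe]
            _ = w*(e*v) := mul_assoc w e v
            _ = 0 := by rw [hev, mul_zero]
        have hvw : v*w = 0 := by
          calc v*w = (v*e)*w := by rw [hve]
            _ = v*(e*w) := mul_assoc v e w
            _ = 0 := by rw [hew, mul_zero]
        rcases H w v (hwv.trans hvw.symm) with h|h|h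
        · exact Or.inl h
        · exact absurd h hv0
        · exact Or.inr h
      have hall : ∀ x : R, x = 0 ∨ x = e ∨ x = v ∨ x = e + v := by
        intro x
        have hbx : e*x + e*(x*e) = 0 := hB0 _ (hb1 x) (hb2 x)
        have hex : e*x = e*(x*e) := by
          have h := hdec2 x
          rw [hbx, zero_add] at h
          exact h
        have hx : x = e*(x*e) + (x*e + e*(x*e)) := by
          have h := hdec x
          rw [hex] at h
          exact h
        rcases hCv _ (hc2 x) (hc1 x) with hc|hc <;> rcases ha x with ha'|ha' <;>
          rw [hc, ha'] at hx
        · exact Or.inl (by rw [add_zero] at hx; exact hx)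
        · exact Or.inr (Or.inl (by rw [add_zero] at hx; exact hx))
        · exact Or.inr (Or.inr (Or.inl (by rw [zero_add] at hx; exact hx)))
        · exact Or.inr (Or.inr (Or.inr hx))
      exact iso_E' e v he hev hve hvv he0 hv0 h2 hall
    · -- both trivial: contradiction with non-commutativity
      exfalso
      push_neg at hC
      have hC0 : ∀ w : R, e*w = 0 → w*e = w → w = 0 := by
        intro w hew hwe
        by_contra hw0
        exact (hC w hw0 hew) hwe
      have hall : ∀ x : R, x = 0 ∨ x = e := by
        intro x
        have hbx : e*x + e*(x*e) = 0 := hB0 _ (hb1 x) (hb2 x)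
        have hcx : x*e + e*(x*e) = 0 := hC0 _ (hc2 x) (hc1 x)
        have hex : e*x = e*(x*e) := by
          have h := hdec2 x
          rw [hbx, zero_add] at h
          exact h
        have hx : x = e*(x*e) := by
          have h := hdec x
          rw [hcx, add_zero, hex] at h
          exact h
        rcases ha x with h|h
        · exact Or.inl (by rw [h] at hx; exact hx)
        · exact Or.inr (by rw [h] at hx; exact hx)
      obtain ⟨x, y, hxy⟩ := hnc
      rcases hall x with rfl|rfl <;> rcases hall y with rfl|rfl <;>
        (apply hxy; first | rfl | rw [zero_mul, mul_zero])

end RingPart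

/-- Theorem A(i): `γ(Γ(R)) + γ(Γ̄(R)) = n` iff `R ≅ E` or `R ≅ F`. -/
theorem stmt_0 (R : Type*) [NonUnitalRing R] [Fintype R] (n : ℕ)
    (hcard : Fintype.card R = n)
    (hnc : ∃ x y : R, x * y ≠ y * x)
    (hz : Set.center R = {0}) :
    (commutingGraph R).dominationNumber + ((commutingGraph R)ᶜ).dominationNumber = n ↔
      (Nonempty (R ≃+* Ering) ∨ Nonempty (R ≃+* Fring)) := by
  subst hcard
  have hmem : ∀ x : R, x ∈ Set.center R ↔ x = 0 := by
    intro x; rw [hz]; exact Set.mem_singleton_iff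
  have hcomm_of_center : ∀ x : R, x ∈ Set.center R → ∀ y : R, y * x = x * y := by
    intro x hx y
    exact Semigroup.mem_center_iff.mp hx y
  have hcardV : Fintype.card {x : R // x ∉ Set.center R} = Fintype.card R - 1 := by
    have h1 : Fintype.card {x : R // x ∉ Set.center R} =
        Fintype.card {x : R // ¬ x = 0} := by
      apply Fintype.card_congr
      exact Equiv.subtypeEquivRight (fun x => not_congr (hmem x))
    rw [h1, Fintype.card_subtype_compl, Fintype.card_subtype_eq]
  have hRpos : 1 ≤ Fintype.card R := Fintype.card_pos_iff.2 ⟨0⟩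
  obtain ⟨x0, y0, hxy0⟩ := hnc
  have hx0c : x0 ∉ Set.center R := fun h => hxy0 (hcomm_of_center x0 h y0).symm
  have hniso : ∀ v : {x : R // x ∉ Set.center R}, ∃ u, ((commutingGraph R)ᶜ).Adj v u := by
    rintro ⟨x, hx⟩
    have hnall : ¬ ∀ g : R, g * x = x * g := fun h => hx (Semigroup.mem_center_iff.mpr h)
    push_neg at hnall
    obtain ⟨y, hy⟩ := hnall
    have hy0 : y ∉ Set.center R := fun h => hy ((hcomm_of_center y h x).symm)
    have hxy : x ≠ y := fun h => hy (by rw [h])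
    refine ⟨⟨y, hy0⟩, ?_⟩
    rw [SimpleGraph.compl_adj]
    refine ⟨fun h => hxy (congrArg Subtype.val h), ?_⟩
    rintro ⟨-, hcomm⟩
    exact hy hcomm.symm
  constructor
  · -- forward direction
    intro hEq
    have hE : ∀ a b, ¬ (commutingGraph R).Adj a b := by
      by_contra hcon
      push_neg at hcon
      obtain ⟨a, b, hab⟩ := hcon
      have hm1 : 1 ≤ Fintype.card {x : R // x ∉ Set.center R} :=
        Fintype.card_pos_iff.2 ⟨⟨x0, hx0c⟩⟩
      by_cases hiso : ∃ v, ∀ u, ¬ (commutingGraph R).Adj v u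
      · obtain ⟨v, hv⟩ := hiso
        have h1 := (commutingGraph R).compl_dominationNumber_le_one' hv
        have h2 := (commutingGraph R).dominationNumber_le_of_edge' hab
        omega
      · push_neg at hiso
        have h1 := (commutingGraph R).two_mul_dominationNumber_le' hiso
        have h2 := SimpleGraph.two_mul_dominationNumber_le' (commutingGraph R)ᶜ hniso
        omega
    have H : ∀ x y : R, x * y = y * x → x = 0 ∨ y = 0 ∨ x = y := by
      intro x y hxy
      by_contra hcon
      push_neg at hcon
      obtain ⟨hx, hy, hne⟩ := hcon
      have hxc : x ∉ Set.center R := fun h => hx ((hmem x).mp h)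
      have hyc : y ∉ Set.center R := fun h => hy ((hmem y).mp h)
      exact hE ⟨x, hxc⟩ ⟨y, hyc⟩ ⟨fun h => hne (congrArg Subtype.val h), hxy⟩
    exact ring_classify' ⟨x0, y0, hxy0⟩ H
  · -- converse direction
    intro hiso'
    have H : ∀ x y : R, x * y = y * x → x = 0 ∨ y = 0 ∨ x = y := by
      rcases hiso' with hne|hne
      · obtain ⟨φ⟩ := hne
        have hfact : ∀ a b : Ering, a * b = b * a → a = 0 ∨ b = 0 ∨ a = b := by decide
        intro x y hxy
        have h' : φ x * φ y = φ y * φ x := by rw [← map_mul, ← map_mul, hxy]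
        rcases hfact _ _ h' with h|h|h
        · exact Or.inl (φ.injective (h.trans (map_zero φ).symm))
        · exact Or.inr (Or.inl (φ.injective (h.trans (map_zero φ).symm)))
        · exact Or.inr (Or.inr (φ.injective h))
      · obtain ⟨φ⟩ := hne
        have hfact : ∀ a b : Fring, a * b = b * a → a = 0 ∨ b = 0 ∨ a = b := by decide
        intro x y hxy
        have h' : φ x * φ y = φ y * φ x := by rw [← map_mul, ← map_mul, hxy]
        rcases hfact _ _ h' with h|h|h
        · exact Or.inl (φ.injective (h.trans (map_zero φ).symm))
        · exact Or.inr (Or.inl (φ.injective (h.trans (map_zero φ).symm)))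
        · exact Or.inr (Or.inr (φ.injective h))
    have hE : ∀ a b, ¬ (commutingGraph R).Adj a b := by
      rintro ⟨x, hx⟩ ⟨y, hy⟩ ⟨hne, hcomm⟩
      rcases H x y hcomm with h|h|h
      · exact hx ((hmem x).mpr h)
      · exact hy ((hmem y).mpr h)
      · exact hne (Subtype.ext h)
    have g1 := (commutingGraph R).dominationNumber_of_edgeless' hE
    have g2 := (commutingGraph R).compl_dominationNumber_of_edgeless' hE ⟨x0, hx0c⟩
    rw [g1, g2]
    omega

end
end

section
/- Let p be a prime and R a non-commutative ring of order p³ with Z(R) = {0}. Then either γ(Γ(R)) = p² + p + 1, or there exist non-negative integers ℓ₁ and ℓ₂ with ℓ₁ + (p + 1)ℓ₂ = p² + p + 1 such that γ(Γ(R)) = ℓ₁ + ℓ₂. -/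
open scoped Classical

noncomputable section

section
variable {R : Type*} [NonUnitalRing R]

/-- centralizer of x as additive subgroup -/
def myCent (x : R) : AddSubgroup R where
  carrier := {y | x * y = y * x}
  zero_mem' := by simp
  add_mem' := by
    intro a b ha hb
    simp only [Set.mem_setOf_eq] at *
    rw [mul_add, add_mul, ha, hb]
  neg_mem' := by
    intro a ha
    simp only [Set.mem_setOf_eq] at *
    rw [mul_neg, neg_mul, ha]

lemma mem_myCent {x y : R} : y ∈ myCent x ↔ x * y = y * x := Iff.rfl

def myZCent (x : R) : AddSubgroup R where
  carrier := {y | x * y = y * x ∧ ∀ w, x * w = w * x → y * w = w * y}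
  zero_mem' := by simp
  add_mem' := by
    intro a b ha hb
    refine ⟨by rw [mul_add, add_mul, ha.1, hb.1], fun w hw => ?_⟩
    rw [add_mul, mul_add, ha.2 w hw, hb.2 w hw]
  neg_mem' := by
    intro a ha
    refine ⟨by rw [mul_neg, neg_mul, ha.1], fun w hw => ?_⟩
    rw [neg_mul, mul_neg, ha.2 w hw]

lemma myZCent_le (x : R) : myZCent x ≤ myCent x := fun _ h => h.1

lemma zmultiples_le_myCent {x y : R} (h : y ∈ myCent x) :
    AddSubgroup.zmultiples y ≤ myCent x := by
  intro a ha
  obtain ⟨n, rfl⟩ := AddSubgroup.mem_zmultiples_iff.mp ha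
  show x * (n • y) = (n • y) * x
  rw [mul_smul_comm, smul_mul_assoc, h]

lemma card_dvd_top (H : AddSubgroup R) [Fintype R] : Nat.card H ∣ Nat.card R := by
  have h1 := AddSubgroup.card_dvd_of_le (le_top (a := H))
  have e : Nat.card (⊤ : AddSubgroup R) = Nat.card R := Nat.card_congr AddSubgroup.topEquiv.toEquiv
  exact e ▸ h1

lemma two_le_card {H : AddSubgroup R} {x : R} (hx : x ≠ 0) (hxH : x ∈ H) [Fintype R] :
    2 ≤ Nat.card H := by
  rw [← SetLike.coe_sort_coe, Nat.card_coe_set_eq]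
  have hsub : ({0, x} : Set R) ⊆ (H : Set R) := by
    intro a ha
    rcases ha with rfl | rfl
    · exact H.zero_mem
    · exact hxH
  calc 2 = ({0, x} : Set R).ncard := (Set.ncard_pair (Ne.symm hx)).symm
    _ ≤ _ := Set.ncard_le_ncard hsub (Set.toFinite _)

lemma set_eq_of_le_card {H K : AddSubgroup R} (hle : H ≤ K) [Fintype R]
    (hc : Nat.card K ≤ Nat.card H) : (H : Set R) = K := by
  apply Set.eq_of_subset_of_ncard_le hle
  rw [← SetLike.coe_sort_coe, Nat.card_coe_set_eq] at hc
  rwa [← SetLike.coe_sort_coe H, Nat.card_coe_set_eq] at hc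

end

section
variable {R : Type*} [NonUnitalRing R] [Fintype R] {p : ℕ}

lemma myCent_ne_top {x : R} (hp : p.Prime) (hcard : Fintype.card R = p ^ 3)
    (hz : Set.center R = {0}) (hx : x ≠ 0) : ∃ w, w ∉ myCent x := by
  have hxc : x ∉ Set.center R := by rw [hz]; simpa using hx
  rw [Semigroup.mem_center_iff] at hxc
  push_neg at hxc
  obtain ⟨w, hw⟩ := hxc
  exact ⟨w, fun h => hw h.symm⟩

lemma eq_of_le_card {H K : AddSubgroup R} (hle : H ≤ K)
    (hc : Nat.card K ≤ Nat.card H) : H = K :=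
  SetLike.coe_set_eq.mp (set_eq_of_le_card hle hc)

lemma myCent_card (hp : p.Prime) (hcard : Fintype.card R = p ^ 3)
    (hz : Set.center R = {0}) {x : R} (hx : x ≠ 0) :
    Nat.card (myCent x) = p ∨ Nat.card (myCent x) = p ^ 2 := by
  have hR : Nat.card R = p ^ 3 := by rw [Nat.card_eq_fintype_card, hcard]
  have hdvd : Nat.card (myCent x) ∣ p ^ 3 := hR ▸ card_dvd_top _
  obtain ⟨k, hk3, hk⟩ := (Nat.dvd_prime_pow hp).mp hdvd
  have h2 : 2 ≤ Nat.card (myCent x) := two_le_card hx (mem_myCent.mpr rfl)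
  have hk0 : k ≠ 0 := by rintro rfl; rw [hk] at h2; norm_num at h2
  have hk3' : k ≠ 3 := by
    rintro rfl
    obtain ⟨w, hw⟩ := myCent_ne_top hp hcard hz hx
    have htop : myCent x = ⊤ := by
      apply eq_of_le_card le_top
      have e : Nat.card (⊤ : AddSubgroup R) = Nat.card R :=
        Nat.card_congr AddSubgroup.topEquiv.toEquiv
      rw [e, hR, hk]
    exact hw (htop ▸ AddSubgroup.mem_top w)
  interval_cases k
  · exact absurd rfl hk0
  · left; simpa using hk
  · right; exact hk
  · exact absurd rfl hk3'

lemma zsmul_comm_mul {y : R} (n m : ℤ) : (n • y) * (m • y) = (m • y) * (n • y) := by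
  rw [smul_mul_assoc, mul_smul_comm, smul_mul_assoc, mul_smul_comm, smul_smul, smul_smul,
    mul_comm n m]

lemma myCent_comm (hp : p.Prime) (hcard : Fintype.card R = p ^ 3)
    (hz : Set.center R = {0}) {x : R} (hx : x ≠ 0) :
    ∀ a ∈ myCent x, ∀ b ∈ myCent x, a * b = b * a := by
  have hR : Nat.card R = p ^ 3 := by rw [Nat.card_eq_fintype_card, hcard]
  have hple : 2 ≤ p := hp.two_le
  rcases myCent_card hp hcard hz hx with hc | hc
  · -- card p : cent x = zmultiples x
    have hle : AddSubgroup.zmultiples x ≤ myCent x :=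
      zmultiples_le_myCent (mem_myCent.mpr rfl)
    have hdvd : Nat.card (AddSubgroup.zmultiples x) ∣ p ^ 3 := hR ▸ card_dvd_top _
    have h2 : 2 ≤ Nat.card (AddSubgroup.zmultiples x) :=
      two_le_card hx (AddSubgroup.mem_zmultiples x)
    obtain ⟨k, hk3, hk⟩ := (Nat.dvd_prime_pow hp).mp hdvd
    have hk0 : k ≠ 0 := by rintro rfl; rw [hk] at h2; norm_num at h2
    have hp_le : p ≤ Nat.card (AddSubgroup.zmultiples x) := by
      rw [hk]; exact Nat.le_self_pow hk0 p
    have hset : AddSubgroup.zmultiples x = myCent x := eq_of_le_card hle (by omega)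
    intro a ha b hb
    rw [← hset] at ha hb
    obtain ⟨n, rfl⟩ := AddSubgroup.mem_zmultiples_iff.mp ha
    obtain ⟨m, rfl⟩ := AddSubgroup.mem_zmultiples_iff.mp hb
    exact zsmul_comm_mul n m
  · -- card p^2
    by_cases hall : ∀ y ∈ myCent x, y ∈ myZCent x
    · intro a ha b hb
      exact (hall a ha).2 b hb
    · push_neg at hall
      obtain ⟨y, hy, hyZ⟩ := hall
      have hZle : myZCent x ≤ myCent x := myZCent_le x
      have hxZ : x ∈ myZCent x := ⟨rfl, fun w hw => by rw [← hw]⟩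
      have hZdvd : Nat.card (myZCent x) ∣ p ^ 3 := hR ▸ card_dvd_top _
      have hZ2 : 2 ≤ Nat.card (myZCent x) := two_le_card hx hxZ
      obtain ⟨k, hk3, hk⟩ := (Nat.dvd_prime_pow hp).mp hZdvd
      have hk0 : k ≠ 0 := by rintro rfl; rw [hk] at hZ2; norm_num at hZ2
      -- H := Z ⊔ zmultiples y equals cent x
      set H := myZCent x ⊔ AddSubgroup.zmultiples y with hH
      have hHle : H ≤ myCent x := sup_le hZle (zmultiples_le_myCent hy)
      have hHdvd : Nat.card H ∣ p ^ 3 := hR ▸ card_dvd_top _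
      obtain ⟨j, hj3, hj⟩ := (Nat.dvd_prime_pow hp).mp hHdvd
      have hHgt : p < Nat.card H := by
        -- H contains Z (card ≥ p^k ≥ p) plus the extra element y
        have hZH : myZCent x ≤ H := le_sup_left
        have hyH : y ∈ H := (le_sup_right : AddSubgroup.zmultiples y ≤ H) (AddSubgroup.mem_zmultiples y)
        have hsub : insert y ((myZCent x : Set R)) ⊆ (H : Set R) := by
          intro a ha
          rcases ha with rfl | ha
          · exact hyH
          · exact hZH ha
        have hcard1 : (insert y ((myZCent x : Set R))).ncard
            = (myZCent x : Set R).ncard + 1 :=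
          Set.ncard_insert_of_notMem hyZ (Set.toFinite _)
        have hle1 : (insert y ((myZCent x : Set R))).ncard ≤ (H : Set R).ncard :=
          Set.ncard_le_ncard hsub (Set.toFinite _)
        have e1 : (myZCent x : Set R).ncard = Nat.card (myZCent x) := by
          rw [← SetLike.coe_sort_coe, Nat.card_coe_set_eq]
        have e2 : (H : Set R).ncard = Nat.card H := by
          rw [← SetLike.coe_sort_coe, Nat.card_coe_set_eq]
        have hpk : p ≤ Nat.card (myZCent x) := by
          rw [hk]; exact Nat.le_self_pow hk0 p
        omega
      have hHcard : p ^ 2 ≤ Nat.card H := by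
        rcases Nat.lt_or_ge j 2 with hj2 | hj2
        · exfalso
          have hple2 : Nat.card H ≤ p := by
            calc Nat.card H = p ^ j := hj
              _ ≤ p ^ 1 := Nat.pow_le_pow_right (by omega) (by omega)
              _ = p := pow_one p
          omega
        · rw [hj]; exact Nat.pow_le_pow_right (by omega) hj2
      have hset : H = myCent x := eq_of_le_card hHle (by omega)
      intro a ha b hb
      rw [← hset] at ha hb
      obtain ⟨z₁, hz₁, s₁, hs₁, rfl⟩ := AddSubgroup.mem_sup.mp ha
      obtain ⟨z₂, hz₂, s₂, hs₂, rfl⟩ := AddSubgroup.mem_sup.mp hb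
      obtain ⟨n, rfl⟩ := AddSubgroup.mem_zmultiples_iff.mp hs₁
      obtain ⟨m, rfl⟩ := AddSubgroup.mem_zmultiples_iff.mp hs₂
      have c2 : z₁ * (m • y) = (m • y) * z₁ := by
        rw [mul_smul_comm, hz₁.2 y hy, smul_mul_assoc]
      have c3 : (n • y) * z₂ = z₂ * (n • y) := by
        rw [smul_mul_assoc, ← hz₂.2 y hy, mul_smul_comm]
      have c4 : (n • y) * (m • y) = (m • y) * (n • y) := zsmul_comm_mul n m
      have c1' : z₁ * z₂ = z₂ * z₁ := hz₁.2 z₂ hz₂.1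
      rw [add_mul, mul_add, mul_add, add_mul, mul_add, mul_add, c1', c2, c3, c4]
      abel

end

/-- If adjacency in `G` is `≠` plus an equivalence relation, then the graph is a
disjoint union of cliques and the domination number is the number of classes. -/
lemma dominationNumber_of_setoid {V : Type*} [Fintype V] (G : SimpleGraph V)
    (s : Setoid V) (h : ∀ a b, G.Adj a b ↔ a ≠ b ∧ s.r a b) :
    G.dominationNumber = Nat.card (Quotient s) := by
  classical
  haveI : Fintype (Quotient s) := Fintype.ofFinite _
  rw [Nat.card_eq_fintype_card]
  set c := Fintype.card (Quotient s) with hc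
  set S : Set ℕ := {n | ∃ D : Finset V, G.IsDominatingSet D ∧ D.card = n} with hS
  have hrefl : ∀ a : V, s.r a a := fun a => s.iseqv.refl a
  -- the set of representatives is a dominating set of size c
  have hmem : c ∈ S := by
    refine ⟨Finset.univ.image (fun t : Quotient s => t.out), ?_, ?_⟩
    · intro v hv
      refine ⟨(⟦v⟧ : Quotient s).out, Finset.mem_image.mpr ⟨⟦v⟧, Finset.mem_univ _, rfl⟩, ?_⟩
      rw [h]
      constructor
      · intro heq; exact hv (heq ▸ Finset.mem_image.mpr ⟨⟦v⟧, Finset.mem_univ _, rfl⟩)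
      · exact Quotient.exact (Quotient.out_eq _)
    · rw [Finset.card_image_of_injective _ (fun a b hab => Quotient.out_inj.mp hab),
        Finset.card_univ]
  -- any dominating set has at least c elements
  have hlow : ∀ n ∈ S, c ≤ n := by
    rintro n ⟨D, hD, rfl⟩
    have hex : ∀ t : Quotient s, ∃ u, u ∈ D ∧ (⟦u⟧ : Quotient s) = t := by
      intro t
      by_cases h1 : t.out ∈ D
      · exact ⟨t.out, h1, t.out_eq⟩
      · obtain ⟨u, hu, hadj⟩ := hD t.out h1
        exact ⟨u, hu, by rw [← t.out_eq]; exact Quotient.sound ((h _ _).mp hadj).2⟩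
    choose f hfD hf using hex
    calc c = (Finset.univ : Finset (Quotient s)).card := (Finset.card_univ).symm
      _ ≤ D.card := Finset.card_le_card_of_injOn f (fun t _ => hfD t)
          (fun t₁ _ t₂ _ he => by rw [← hf t₁, ← hf t₂, he])
  have h1 : sInf S ≤ c := Nat.sInf_le hmem
  have h2 : c ≤ sInf S := hlow _ (Nat.sInf_mem ⟨c, hmem⟩)
  exact le_antisymm h1 h2

/-- Theorem B: for a non-commutative ring of order `p³` with trivial center,
either `γ(Γ(R)) = p² + p + 1`, or `γ(Γ(R)) = ℓ₁ + ℓ₂` where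
`ℓ₁ + (p+1)ℓ₂ = p² + p + 1`. -/
theorem stmt_3 (p : ℕ) (hp : p.Prime)
    (R : Type*) [NonUnitalRing R] [Fintype R]
    (hcard : Fintype.card R = p ^ 3)
    (hnc : ∃ x y : R, x * y ≠ y * x)
    (hz : Set.center R = {0}) :
    (commutingGraph R).dominationNumber = p ^ 2 + p + 1 ∨
      ∃ ℓ₁ ℓ₂ : ℕ, ℓ₁ + (p + 1) * ℓ₂ = p ^ 2 + p + 1 ∧
        (commutingGraph R).dominationNumber = ℓ₁ + ℓ₂ := by
  classical
  right
  have hple : 2 ≤ p := hp.two_le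
  have hV : ∀ v : {x : R // x ∉ Set.center R}, (v : R) ≠ 0 := by
    intro v hv0
    apply v.2
    have h0 : (0 : R) ∈ Set.center R := by rw [hz]; exact rfl
    rw [hv0]; exact h0
  have hmemV : ∀ y : R, y ≠ 0 → y ∉ Set.center R := by
    intro y hy hc
    rw [hz] at hc
    exact hy hc
  let s : Setoid {x : R // x ∉ Set.center R} := ⟨fun a b => (a : R) * b = (b : R) * a,
    ⟨fun a => rfl, fun {a b} hab => hab.symm,
     fun {a b c} hab hbc =>
       myCent_comm hp hcard hz (hV b) (a : R)
         (show ((b : R)) * a = (a : R) * b from hab.symm) (c : R) hbc⟩⟩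
  haveI : Fintype (Quotient s) := Fintype.ofFinite _
  set F : Quotient s → ℕ := fun t =>
    (Finset.univ.filter (fun v : {x : R // x ∉ Set.center R} =>
      (⟦v⟧ : Quotient s) = t)).card with hFdef
  have hF : ∀ t : Quotient s, F t + 1 = Nat.card (myCent ((t.out : {x : R // x ∉ Set.center R}) : R)) := by
    intro t
    set v : {x : R // x ∉ Set.center R} := t.out with hvdef
    set B : Finset R := Finset.univ.filter (fun y : R => (v : R) * y = y * (v : R)) with hB
    have hBcard : B.card = Nat.card (myCent ((v : R))) := by
      rw [Nat.card_eq_fintype_card, Fintype.card_subtype]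
      refine congrArg Finset.card ?_
      ext y
      simp [hB, mem_myCent]
    have h0B : (0 : R) ∈ B := by simp [hB]
    have hfib : F t = (B.erase 0).card := by
      apply Finset.card_nbij (fun u : {x : R // x ∉ Set.center R} => (u : R))
      · intro u hu
        simp only [Finset.mem_coe, Finset.mem_filter, Finset.mem_univ, true_and] at hu
        have hr : (u : R) * v = (v : R) * u :=
          Quotient.exact (hu.trans (Quotient.out_eq t).symm)
        exact Finset.mem_coe.mpr (Finset.mem_erase.mpr ⟨hV u,
          Finset.mem_filter.mpr ⟨Finset.mem_univ _, hr.symm⟩⟩)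
      · intro u₁ _ u₂ _ h
        exact Subtype.ext h
      · intro y hy
        simp only [hB, Finset.coe_erase, Set.mem_diff, Finset.mem_coe, Finset.mem_filter,
          Finset.mem_univ, true_and, Set.mem_singleton_iff] at hy
        refine ⟨⟨y, hmemV y hy.2⟩, ?_, rfl⟩
        simp only [Finset.mem_coe, Finset.mem_filter, Finset.mem_univ, true_and]
        exact (Quotient.sound (show y * (v : R) = (v : R) * y from hy.1.symm)).trans
          (Quotient.out_eq t)
    have hBpos : 1 ≤ B.card := Finset.card_pos.mpr ⟨0, h0B⟩
    rw [hfib, Finset.card_erase_of_mem h0B, ← hBcard]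
    omega
  have hFd : ∀ t : Quotient s, F t = p - 1 ∨ F t = p ^ 2 - 1 := by
    intro t
    have h1 := hF t
    rcases myCent_card hp hcard hz (hV t.out) with hcc | hcc
    · left; omega
    · right; omega
  have hsum : ∑ t : Quotient s, F t = Fintype.card {x : R // x ∉ Set.center R} := by
    rw [← Finset.card_univ]
    exact (Finset.card_eq_sum_card_fiberwise
      (f := fun v : {x : R // x ∉ Set.center R} => (⟦v⟧ : Quotient s))
      (t := Finset.univ) (fun x _ => Finset.mem_univ _)).symm
  have hcardV : Fintype.card {x : R // x ∉ Set.center R} = p ^ 3 - 1 := by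
    rw [Fintype.card_subtype]
    have he : Finset.univ.filter (fun x : R => x ∉ Set.center R) = Finset.univ.erase 0 := by
      ext x
      simp [hz, eq_comm]
    rw [he, Finset.card_erase_of_mem (Finset.mem_univ _), Finset.card_univ, hcard]
  set l1 := (Finset.univ.filter (fun t : Quotient s => F t = p - 1)).card with hl1
  set l2 := (Finset.univ.filter (fun t : Quotient s => ¬ F t = p - 1)).card with hl2
  have hppsq : p < p ^ 2 := by
    have h2 : p * 2 ≤ p * p := Nat.mul_le_mul_left p hple
    have : p ^ 2 = p * p := sq p
    omega
  have hl12 : l1 + l2 = Fintype.card (Quotient s) := by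
    rw [hl1, hl2, Finset.card_filter_add_card_filter_not, Finset.card_univ]
  have hsum2 : ∑ t : Quotient s, F t = l1 * (p - 1) + l2 * (p ^ 2 - 1) := by
    rw [← Finset.sum_filter_add_sum_filter_not Finset.univ (fun t => F t = p - 1)]
    congr 1
    · rw [Finset.sum_congr rfl (fun t ht => (Finset.mem_filter.mp ht).2),
        Finset.sum_const, smul_eq_mul]
    · rw [Finset.sum_congr rfl (fun t ht => ?_), Finset.sum_const, smul_eq_mul]
      rcases hFd t with h | h
      · exact absurd h (Finset.mem_filter.mp ht).2
      · exact h
  have heq : l1 * (p - 1) + l2 * (p ^ 2 - 1) = p ^ 3 - 1 := by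
    rw [← hsum2, hsum, hcardV]
  refine ⟨l1, l2, ?_, ?_⟩
  · have hp1 : 1 ≤ p := by omega
    have hp2 : 1 ≤ p ^ 2 := Nat.one_le_pow _ _ (by omega)
    have hp3 : 1 ≤ p ^ 3 := Nat.one_le_pow _ _ (by omega)
    zify [hp1, hp2, hp3] at heq
    have key : ((l1 : ℤ) + ((p : ℤ) + 1) * l2) * ((p : ℤ) - 1)
        = ((p : ℤ) ^ 2 + p + 1) * ((p : ℤ) - 1) := by linear_combination heq
    have hpne : (p : ℤ) - 1 ≠ 0 := by
      have h2 : (2 : ℤ) ≤ (p : ℤ) := by exact_mod_cast hple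
      omega
    have := mul_right_cancel₀ hpne key
    exact_mod_cast this
  · have hdom : (commutingGraph R).dominationNumber = Nat.card (Quotient s) :=
      dominationNumber_of_setoid _ s (fun a b => Iff.rfl)
    rw [hdom, Nat.card_eq_fintype_card, ← hl12]

end
end

section
/- Let R be a finite non-commutative ring of even order n with Z(R) = {0}. Then γ_s(Γ(R)) = n - 1 if and only if R is isomorphic to E or to F. -/
open scoped Classical

noncomputable section

-- AUX (to be concatenated)
namespace CGaux
open Finset

section graph
variable {V : Type*} [Fintype V] (G : SimpleGraph V)

def feas : Set ℤ := {w : ℤ | ∃ f : V → ℤ, (∀ v, f v = 1 ∨ f v = -1) ∧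
    (∀ v : V, 1 ≤ ∑ u ∈ Finset.univ.filter (fun u => G.Adj v u ∨ u = v), f u) ∧
    w = ∑ v, f v}

lemma sdn_def : G.signedDominationNumber = sInf (feas G) := rfl

lemma ones_mem : ((Fintype.card V : ℤ)) ∈ feas G := by
  refine ⟨fun _ => 1, fun v => Or.inl rfl, fun v => ?_, by simp⟩
  rw [Finset.sum_const, nsmul_eq_mul, mul_one]
  have hv : v ∈ Finset.univ.filter (fun u => G.Adj v u ∨ u = v) := by simp
  exact_mod_cast Finset.card_pos.mpr ⟨v, hv⟩

lemma feas_bdd : BddBelow (feas G) := by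
  refine ⟨-(Fintype.card V : ℤ), ?_⟩
  rintro w ⟨f, h1, _, rfl⟩
  have h : ∀ v ∈ Finset.univ, (-1 : ℤ) ≤ f v := by
    intro v _; rcases h1 v with h | h <;> simp [h]
  have := Finset.sum_le_sum h
  simpa using this

lemma sdn_empty (h : ∀ a b, ¬ G.Adj a b) :
    G.signedDominationNumber = (Fintype.card V : ℤ) := by
  rw [sdn_def]
  have hset : feas G = {(Fintype.card V : ℤ)} := by
    apply Set.eq_singleton_iff_unique_mem.mpr
    refine ⟨ones_mem G, ?_⟩
    rintro w ⟨f, h1, h2, rfl⟩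
    have hf : ∀ v, f v = 1 := by
      intro v
      have hT : Finset.univ.filter (fun u => G.Adj v u ∨ u = v) = {v} := by
        ext u; simp [h v u, eq_comm]
      have := h2 v
      rw [hT, Finset.sum_singleton] at this
      rcases h1 v with h' | h'
      · exact h'
      · omega
    simp [hf, Finset.card_univ]
  rw [hset, csInf_singleton]

lemma sdn_le (v₀ : V)
    (h : ∀ v : V, (G.Adj v v₀ ∨ v₀ = v) →
      3 ≤ (Finset.univ.filter (fun u => G.Adj v u ∨ u = v)).card) :
    G.signedDominationNumber ≤ (Fintype.card V : ℤ) - 2 := by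
  rw [sdn_def]
  apply csInf_le (feas_bdd G)
  refine ⟨fun u => if u = v₀ then (-1 : ℤ) else 1,
    fun v => by by_cases h : v = v₀ <;> simp [h], ?_, ?_⟩
  · intro v
    set T := Finset.univ.filter (fun u => G.Adj v u ∨ u = v) with hTdef
    have key : ∑ u ∈ T, (if u = v₀ then (-1 : ℤ) else 1) =
        (T.card : ℤ) - (if v₀ ∈ T then 2 else 0) := by
      have h1 : ∀ u ∈ T, (if u = v₀ then (-1 : ℤ) else 1)
          = 1 - (if u = v₀ then 2 else 0) := by
        intro u _; by_cases h : u = v₀ <;> simp [h]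
      rw [Finset.sum_congr rfl h1, Finset.sum_sub_distrib, Finset.sum_const,
        Finset.sum_ite_eq' T v₀ (fun _ => (2:ℤ))]
      simp
    rw [key]
    by_cases hv₀ : v₀ ∈ T
    · have hmem : G.Adj v v₀ ∨ v₀ = v := by simpa [hTdef] using hv₀
      have h3 := h v hmem
      rw [if_pos hv₀]
      have h4 : (3 : ℤ) ≤ T.card := by exact_mod_cast h3
      omega
    · rw [if_neg hv₀]
      have hv : v ∈ T := by simp [hTdef]
      have hc : 0 < T.card := Finset.card_pos.mpr ⟨v, hv⟩
      have h5 : (1 : ℤ) ≤ (T.card : ℤ) := by exact_mod_cast hc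
      omega
  · have key : ∑ u : V, (if u = v₀ then (-1 : ℤ) else 1) =
        ((Fintype.card V : ℤ)) - 2 := by
      have h1 : ∀ u ∈ Finset.univ, (if u = v₀ then (-1 : ℤ) else 1)
          = 1 - (if u = v₀ then 2 else 0) := by
        intro u _; by_cases h : u = v₀ <;> simp [h]
      rw [Finset.sum_congr rfl h1, Finset.sum_sub_distrib, Finset.sum_const,
        Finset.sum_ite_eq' Finset.univ v₀ (fun _ => (2:ℤ))]
      simp [Finset.card_univ]
    rw [key]

lemma three_le_card_filter {W : Type*} [Fintype W] (p : W → Prop) [DecidablePred p]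
    (a b c : W) (ha : p a) (hb : p b) (hc : p c)
    (hab : a ≠ b) (hac : a ≠ c) (hbc : b ≠ c) :
    3 ≤ (Finset.univ.filter p).card := by
  classical
  have hsub : ({a, b, c} : Finset W) ⊆ Finset.univ.filter p := by
    intro u hu
    simp only [Finset.mem_insert, Finset.mem_singleton] at hu
    rcases hu with rfl | rfl | rfl <;> simp [ha, hb, hc]
  have hle := Finset.card_le_card hsub
  rwa [Finset.card_insert_of_notMem (by simp [hab, hac]),
    Finset.card_insert_of_notMem (by simp [hbc]), Finset.card_singleton] at hle

end graph
end CGaux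


lemma structure_lemma {R : Type*} [NonUnitalRing R]
    (hnc : ∃ x y : R, x * y ≠ y * x)
    (hcent : ∀ x y : R, x ≠ 0 → y ≠ 0 → x * y = y * x → x = y) :
    ∃ e z : R, e ≠ 0 ∧ z ≠ 0 ∧ e * e = e ∧ z * z = 0 ∧
      (∀ w : R, w + w = 0) ∧
      (∀ w : R, w = 0 ∨ w = e ∨ w = z ∨ w = e + z) ∧
      ((e * z = z ∧ z * e = 0) ∨ (e * z = 0 ∧ z * e = z)) := by
  have char2 : ∀ w : R, w + w = 0 := by
    intro w
    by_cases hw : w = 0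
    · simp [hw]
    by_cases h2 : w + w = 0
    · exact h2
    have hcomm : (w + w) * w = w * (w + w) := by rw [add_mul, mul_add]
    have hww := hcent _ _ h2 hw hcomm
    rw [add_eq_left] at hww
    exact absurd hww hw
  have addeq : ∀ a b : R, a + b = 0 → a = b := by
    intro a b h
    have : a = a + (b + b) := by rw [char2 b, add_zero]
    rw [← add_assoc, h, zero_add] at this
    exact this
  have sq : ∀ w : R, w * w = 0 ∨ w * w = w := by
    intro w
    by_cases hw : w = 0
    · left; simp [hw]
    by_cases hs : w * w = 0
    · left; exact hs
    right
    exact hcent _ _ hs hw (by rw [mul_assoc])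
  obtain ⟨x0, y0, hnc'⟩ := hnc
  have hid : ∃ e : R, e ≠ 0 ∧ e * e = e := by
    by_contra hno
    push_neg at hno
    have hsq0 : ∀ w : R, w * w = 0 := by
      intro w
      rcases sq w with h | h
      · exact h
      by_cases hw : w = 0
      · simp [hw]
      · exact absurd h (hno w hw)
    have hcm : ∀ a b : R, a * b = b * a := by
      intro a b
      have h := hsq0 (a + b)
      rw [add_mul, mul_add, mul_add, hsq0 a, hsq0 b, zero_add, add_zero] at h
      exact addeq _ _ h
    exact hnc' (hcm x0 y0)
  obtain ⟨e, he0, hee⟩ := hid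
  have hnotall : ∃ u : R, e * u ≠ u * e := by
    by_contra hall
    push_neg at hall
    have h01 : ∀ u : R, u = 0 ∨ u = e := by
      intro u
      by_cases hu : u = 0
      · left; exact hu
      · right; exact hcent u e hu he0 (hall u).symm
    rcases h01 x0 with h | h <;> rcases h01 y0 with h' | h' <;>
      subst h <;> subst h' <;> simp at hnc'
  obtain ⟨y, hy⟩ := hnotall
  -- helper computations
  have heL : ∀ a : R, e * (e * a) = e * a := by
    intro a; rw [← mul_assoc, hee]
  have heR : ∀ a : R, (a * e) * e = a * e := by
    intro a; rw [mul_assoc, hee]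
  have heMid : ∀ a : R, e * (e * a * e) = e * a * e := by
    intro a; rw [← mul_assoc, ← mul_assoc, hee]
  have heMid' : ∀ a : R, (e * a * e) * e = e * a * e := by
    intro a; rw [mul_assoc, hee]
  -- produce z with one of the two patterns
  have hzex : ∃ z : R, z ≠ 0 ∧ z * z = 0 ∧
      ((e * z = z ∧ z * e = 0) ∨ (e * z = 0 ∧ z * e = z)) := by
    by_cases hF : ∀ v : R, e * v * e = e * v
    · -- E pattern: z = y*e + e*y*e, e*z = 0, z*e = z
      have hez : e * (y * e + e * y * e) = 0 := by
        rw [mul_add, ← mul_assoc, heMid]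
        exact char2 _
      have hze : (y * e + e * y * e) * e = y * e + e * y * e := by
        rw [add_mul, heR, heMid']
      have hzz : (y * e + e * y * e) * (y * e + e * y * e) = 0 := by
        calc (y * e + e * y * e) * (y * e + e * y * e)
            = ((y * e + e * y * e) * e) * (y * e + e * y * e) := by rw [hze]
          _ = (y * e + e * y * e) * (e * (y * e + e * y * e)) := by rw [mul_assoc]
          _ = 0 := by rw [hez, mul_zero]
      refine ⟨y * e + e * y * e, ?_, hzz, Or.inr ⟨hez, hze⟩⟩
      intro h
      have h2 : y * e = e * y * e := addeq _ _ h
      rw [hF y] at h2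
      exact hy h2.symm
    · push_neg at hF
      obtain ⟨v, hv⟩ := hF
      have hez : e * (e * v + e * v * e) = e * v + e * v * e := by
        rw [mul_add, heL, heMid]
      have hze : (e * v + e * v * e) * e = 0 := by
        rw [add_mul, heMid']
        exact char2 _
      have hzz : (e * v + e * v * e) * (e * v + e * v * e) = 0 := by
        calc (e * v + e * v * e) * (e * v + e * v * e)
            = (e * v + e * v * e) * (e * (e * v + e * v * e)) := by rw [hez]
          _ = ((e * v + e * v * e) * e) * (e * v + e * v * e) := (mul_assoc _ e _).symm
          _ = 0 := by rw [hze, zero_mul]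
      refine ⟨e * v + e * v * e, ?_, hzz, Or.inl ⟨hez, hze⟩⟩
      intro h
      exact hv (addeq _ _ h).symm
  obtain ⟨z, hz0, hzz, hpat⟩ := hzex
  have habel : ∀ a b : R, a + (b + (a + b)) = 0 := by
    intro a b
    have h : a + (b + (a + b)) = (a + a) + (b + b) := by abel
    rw [h, char2, char2, add_zero]
  have habel2 : ∀ a b : R, a + (a + (b + b)) = 0 := by
    intro a b
    rw [char2 b, add_zero, char2]
  have hcov : ∀ w : R, w = 0 ∨ w = e ∨ w = z ∨ w = e + z := by
    intro w
    have hc : e * w * e = 0 ∨ e * w * e = e := by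
      by_cases h : e * w * e = 0
      · left; exact h
      · right; exact hcent _ _ h he0 (by rw [heMid', heMid])
    have hep : e * (e * w + e * w * e) = e * w + e * w * e := by
      rw [mul_add, heL, heMid]
    have hpe : (e * w + e * w * e) * e = 0 := by
      rw [add_mul, heMid']
      exact char2 _
    have her : e * (w * e + e * w * e) = 0 := by
      rw [mul_add, ← mul_assoc, heMid]
      exact char2 _
    have hre : (w * e + e * w * e) * e = w * e + e * w * e := by
      rw [add_mul, heR, heMid']
    have hqe : (w + (e * w + (w * e + e * w * e))) * e = 0 := by
      rw [add_mul, add_mul, add_mul, heR w, heMid']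
      exact habel (w * e) (e * w * e)
    have heq : e * (w + (e * w + (w * e + e * w * e))) = 0 := by
      rw [mul_add, mul_add, mul_add, heL w, heMid w, ← mul_assoc e w e]
      exact habel2 (e * w) (e * w * e)
    have hq : w + (e * w + (w * e + e * w * e)) = 0 := by
      by_contra h
      have hqeq := hcent _ e h he0 (by rw [hqe, heq])
      rw [hqeq, hee] at heq
      exact he0 heq
    have hw1 : w = e * w + (w * e + e * w * e) := addeq _ _ hq
    have grand : ∀ p0 r0 c0 : R, e * w + e * w * e = p0 → w * e + e * w * e = r0 →
        e * w * e = c0 → w = p0 + (r0 + c0) := by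
      intro p0 r0 c0 hp hr hcc
      subst hp; subst hr; subst hcc
      conv_lhs => rw [hw1]
      have h : (e * w + e * w * e) + ((w * e + e * w * e) + e * w * e)
          = (e * w + (w * e + e * w * e)) + (e * w * e + e * w * e) := by abel
      rw [h, char2, add_zero]
    rcases hpat with ⟨hez, hze⟩ | ⟨hez, hze⟩
    · -- F pattern: e*z = z, z*e = 0
      have hpz : ∀ p : R, e * p = p → p * e = 0 → p = 0 ∨ p = z := by
        intro p hp1 hp2
        by_cases h : p = 0
        · left; exact h
        right
        have h1 : p * z = 0 := by rw [← hez, ← mul_assoc, hp2, zero_mul]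
        have h2 : z * p = 0 := by
          calc z * p = z * (e * p) := by rw [hp1]
            _ = (z * e) * p := by rw [mul_assoc]
            _ = 0 := by rw [hze, zero_mul]
        exact hcent p z h hz0 (by rw [h1, h2])
      have hr0 : ∀ r : R, e * r = 0 → r * e = r → r = 0 := by
        intro r h1 h2
        by_cases h : r = 0
        · exact h
        exfalso
        have hrz : r * z = 0 := by
          by_contra hrz
          have heqq : (r * z) * e = e * (r * z) := by
            calc (r * z) * e = r * (z * e) := by rw [mul_assoc]
              _ = 0 := by rw [hze, mul_zero]
              _ = (e * r) * z := by rw [h1, zero_mul]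
              _ = e * (r * z) := by rw [mul_assoc]
          have := hcent _ e hrz he0 heqq
          have h3 : e * (r * z) = 0 := by rw [← mul_assoc, h1, zero_mul]
          rw [this, hee] at h3
          exact he0 h3
        have hzr : z * r = 0 := by
          by_contra hzr
          have heqq : (z * r) * e = e * (z * r) := by
            calc (z * r) * e = z * (r * e) := by rw [mul_assoc]
              _ = z * r := by rw [h2]
              _ = (e * z) * r := by rw [hez]
              _ = e * (z * r) := by rw [mul_assoc]
          have hzre := hcent _ e hzr he0 heqq
          -- (z*r)*(z*r) = 0 but equals e*e = e
          have h4 : (z * r) * (z * r) = 0 := by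
            calc (z * r) * (z * r) = z * (r * (z * r)) := by rw [mul_assoc]
              _ = z * ((r * z) * r) := by rw [mul_assoc]
              _ = 0 := by rw [hrz, zero_mul, mul_zero]
          rw [hzre, hee] at h4
          exact he0 h4
        have hne : z + r ≠ 0 := by
          intro h5
          have h6 : z = r := addeq _ _ h5
          rw [← h6] at h1
          rw [hez] at h1
          exact hz0 h1
        have h7 : z * (z + r) = (z + r) * z := by
          rw [mul_add, add_mul, hzz, hzr, hrz, add_zero]
        have h8 := hcent z (z + r) hz0 hne h7
        rw [left_eq_add] at h8
        exact h h8
      have hrr : w * e + e * w * e = 0 := hr0 _ her hre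
      rcases hpz _ hep hpe with hp | hp <;> rcases hc with hcc | hcc <;>
        have hwv := grand _ _ _ hp hrr hcc <;>
        simp only [zero_add, add_zero] at hwv
      · left; exact hwv
      · right; left; exact hwv
      · right; right; left; exact hwv
      · right; right; right; rw [hwv, add_comm]
    · -- E pattern: e*z = 0, z*e = z
      have hrz : ∀ r : R, e * r = 0 → r * e = r → r = 0 ∨ r = z := by
        intro r h1 h2
        by_cases h : r = 0
        · left; exact h
        right
        have hzr : z * r = 0 := by
          calc z * r = (z * e) * r := by rw [hze]
            _ = z * (e * r) := by rw [mul_assoc]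
            _ = 0 := by rw [h1, mul_zero]
        have hrz2 : r * z = 0 := by
          calc r * z = (r * e) * z := by rw [h2]
            _ = r * (e * z) := by rw [mul_assoc]
            _ = 0 := by rw [hez, mul_zero]
        exact hcent r z h hz0 (by rw [hzr, hrz2])
      have hp0 : ∀ p : R, e * p = p → p * e = 0 → p = 0 := by
        intro p h1 h2
        by_cases h : p = 0
        · exact h
        exfalso
        have hzp : z * p = 0 := by
          by_contra hzp
          have heqq : (z * p) * e = e * (z * p) := by
            calc (z * p) * e = z * (p * e) := by rw [mul_assoc]
              _ = 0 := by rw [h2, mul_zero]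
              _ = (e * z) * p := by rw [hez, zero_mul]
              _ = e * (z * p) := by rw [mul_assoc]
          have := hcent _ e hzp he0 heqq
          have h3 : e * (z * p) = 0 := by rw [← mul_assoc, hez, zero_mul]
          rw [this, hee] at h3
          exact he0 h3
        have hpz2 : p * z = 0 := by
          by_contra hpz2
          have heqq : (p * z) * e = e * (p * z) := by
            calc (p * z) * e = p * (z * e) := by rw [mul_assoc]
              _ = p * z := by rw [hze]
              _ = (e * p) * z := by rw [h1]
              _ = e * (p * z) := by rw [mul_assoc]
          have hpze := hcent _ e hpz2 he0 heqq
          have h4 : (p * z) * (p * z) = 0 := by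
            calc (p * z) * (p * z) = p * (z * (p * z)) := by rw [mul_assoc]
              _ = p * ((z * p) * z) := by rw [mul_assoc]
              _ = 0 := by rw [hzp, zero_mul, mul_zero]
          rw [hpze, hee] at h4
          exact he0 h4
        have hne : z + p ≠ 0 := by
          intro h5
          have h6 : z = p := addeq _ _ h5
          rw [← h6] at h2
          rw [hze] at h2
          exact hz0 h2
        have h7 : z * (z + p) = (z + p) * z := by
          rw [mul_add, add_mul, hzz, hzp, hpz2, add_zero]
        have h8 := hcent z (z + p) hz0 hne h7
        rw [left_eq_add] at h8
        exact h h8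
      have hpp : e * w + e * w * e = 0 := hp0 _ hep hpe
      rcases hrz _ her hre with hr | hr <;> rcases hc with hcc | hcc <;>
        have hwv := grand _ _ _ hpp hr hcc <;>
        simp only [zero_add, add_zero] at hwv
      · left; exact hwv
      · right; left; exact hwv
      · right; right; left; exact hwv
      · right; right; right; rw [hwv, add_comm]
  exact ⟨e, z, he0, hz0, hee, hzz, char2, hcov, hpat⟩

section build
variable {R : Type*} [NonUnitalRing R] (e z : R)

variable {R : Type*} [NonUnitalRing R] (e z : R)

/-- Generic builder: given a 4-element target ring T (one of Ering/Fring) with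
distinguished elements, build the equiv. We do it concretely twice below. -/

lemma build_equiv_E (he0 : e ≠ 0) (hz0 : z ≠ 0) (hee : e * e = e) (hzz : z * z = 0)
    (hez : e * z = 0) (hze : z * e = z) (char2 : ∀ w : R, w + w = 0)
    (hcov : ∀ w : R, w = 0 ∨ w = e ∨ w = z ∨ w = e + z) :
    Nonempty (R ≃+* Ering) := by
  have hnez : e ≠ z := by
    intro h
    have h2 := hee
    rw [h, hzz] at h2
    exact hz0 h2.symm
  have addeq : ∀ a b : R, a + b = 0 → a = b := by
    intro a b h
    have h2 : a = a + (b + b) := by rw [char2 b, add_zero]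
    rw [← add_assoc, h, zero_add] at h2
    exact h2
  have hez0 : e + z ≠ 0 := fun h => hnez (addeq _ _ h)
  have heze : e + z ≠ e := fun h => hz0 (by rwa [add_eq_left] at h)
  have hezz : e + z ≠ z := fun h => he0 (by rwa [add_eq_right] at h)
  set ψ : Ering → R := fun u => (if u.1 = 1 then e else 0) + (if u.2 = 1 then z else 0)
    with hψ
  have hψ00 : ψ ((0, 0) : Ering) = 0 := by simp [hψ]
  have hψ0 : ψ (0 : Ering) = 0 := hψ00
  have hψ10 : ψ ((1, 0) : Ering) = e := by norm_num [hψ]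
  have hψ01 : ψ ((0, 1) : Ering) = z := by norm_num [hψ]
  have hψ11 : ψ ((1, 1) : Ering) = e + z := by norm_num [hψ]
  have hcases : ∀ u : Ering, u = ((0,0) : Ering) ∨ u = ((1,0) : Ering)
      ∨ u = ((0,1) : Ering) ∨ u = ((1,1) : Ering) := by unfold Ering; decide
  set φ : R → Ering := fun w =>
    if w = e then ((1,0) : Ering) else if w = z then ((0,1) : Ering)
    else if w = e + z then ((1,1) : Ering) else ((0,0) : Ering) with hφ
  have left_inv : Function.LeftInverse φ ψ := by
    intro u
    rcases hcases u with h | h | h | h <;> subst h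
    · rw [hψ00]; simp [hφ, he0.symm, hz0.symm, hez0.symm]; rfl
    · rw [hψ10]; simp [hφ]; rfl
    · rw [hψ01]; simp [hφ, hnez.symm]; rfl
    · rw [hψ11]; simp [hφ, heze, hezz]; rfl
  have right_inv : Function.RightInverse φ ψ := by
    intro w
    rcases hcov w with h | h | h | h <;> subst h
    · simp [hφ, he0.symm, hz0.symm, hez0.symm, hψ00, hψ0]
    · simp only [hφ, ↓reduceIte]; exact hψ10
    · simp only [hφ, hnez.symm, ↓reduceIte]; exact hψ01
    · simp only [hφ, heze, hezz, ↓reduceIte]; exact hψ11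
  have hcomp : ∀ (x : R) (a b : ZMod 2), (if a + b = 1 then x else 0)
      = (if a = 1 then x else 0) + (if b = 1 then x else 0) := by
    intro x a b
    rcases (show ∀ a : ZMod 2, a = 0 ∨ a = 1 by decide) a with rfl | rfl <;>
      rcases (show ∀ a : ZMod 2, a = 0 ∨ a = 1 by decide) b with rfl | rfl <;>
      norm_num [show (1:ZMod 2) + 1 = 0 from rfl]
    exact (char2 x).symm
  have hmul : ∀ (x y : R) (a b : ZMod 2), (if a = 1 then x else 0) * (if b = 1 then y else 0)
      = (if a * b = 1 then x * y else 0) := by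
    intro x y a b
    rcases (show ∀ a : ZMod 2, a = 0 ∨ a = 1 by decide) a with rfl | rfl <;>
      rcases (show ∀ a : ZMod 2, a = 0 ∨ a = 1 by decide) b with rfl | rfl <;>
      norm_num
  have map_add : ∀ u v : Ering, ψ (u + v) = ψ u + ψ v := by
    intro u v
    have h1 : (u + v).1 = u.1 + v.1 := rfl
    have h2 : (u + v).2 = u.2 + v.2 := rfl
    simp only [hψ, h1, h2, hcomp]
    abel
  have map_mul : ∀ u v : Ering, ψ (u * v) = ψ u * ψ v := by
    intro u v
    have h1 : (u * v).1 = v.1 * u.1 := rfl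
    have h2 : (u * v).2 = v.1 * u.2 := rfl
    simp only [hψ, h1, h2, mul_add, add_mul, hmul, hee, hez, hze, hzz, ite_self,
      add_zero, zero_add]
    rw [mul_comm v.1 u.1, mul_comm v.1 u.2]
  exact ⟨(RingEquiv.mk ⟨ψ, φ, left_inv, right_inv⟩ map_mul map_add).symm⟩

lemma build_equiv_F (he0 : e ≠ 0) (hz0 : z ≠ 0) (hee : e * e = e) (hzz : z * z = 0)
    (hez : e * z = z) (hze : z * e = 0) (char2 : ∀ w : R, w + w = 0)
    (hcov : ∀ w : R, w = 0 ∨ w = e ∨ w = z ∨ w = e + z) :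
    Nonempty (R ≃+* Fring) := by
  have hnez : e ≠ z := by
    intro h
    have h2 := hee
    rw [h, hzz] at h2
    exact hz0 h2.symm
  have addeq : ∀ a b : R, a + b = 0 → a = b := by
    intro a b h
    have h2 : a = a + (b + b) := by rw [char2 b, add_zero]
    rw [← add_assoc, h, zero_add] at h2
    exact h2
  have hez0 : e + z ≠ 0 := fun h => hnez (addeq _ _ h)
  have heze : e + z ≠ e := fun h => hz0 (by rwa [add_eq_left] at h)
  have hezz : e + z ≠ z := fun h => he0 (by rwa [add_eq_right] at h)
  set ψ : Fring → R := fun u => (if u.1 = 1 then e else 0) + (if u.2 = 1 then z else 0)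
    with hψ
  have hψ00 : ψ ((0, 0) : Fring) = 0 := by simp [hψ]
  have hψ0 : ψ (0 : Fring) = 0 := hψ00
  have hψ10 : ψ ((1, 0) : Fring) = e := by norm_num [hψ]
  have hψ01 : ψ ((0, 1) : Fring) = z := by norm_num [hψ]
  have hψ11 : ψ ((1, 1) : Fring) = e + z := by norm_num [hψ]
  have hcases : ∀ u : Fring, u = ((0,0) : Fring) ∨ u = ((1,0) : Fring)
      ∨ u = ((0,1) : Fring) ∨ u = ((1,1) : Fring) := by unfold Fring; decide
  set φ : R → Fring := fun w =>
    if w = e then ((1,0) : Fring) else if w = z then ((0,1) : Fring)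
    else if w = e + z then ((1,1) : Fring) else ((0,0) : Fring) with hφ
  have left_inv : Function.LeftInverse φ ψ := by
    intro u
    rcases hcases u with h | h | h | h <;> subst h
    · rw [hψ00]; simp [hφ, he0.symm, hz0.symm, hez0.symm]; rfl
    · rw [hψ10]; simp [hφ]; rfl
    · rw [hψ01]; simp [hφ, hnez.symm]; rfl
    · rw [hψ11]; simp [hφ, heze, hezz]; rfl
  have right_inv : Function.RightInverse φ ψ := by
    intro w
    rcases hcov w with h | h | h | h <;> subst h
    · simp [hφ, he0.symm, hz0.symm, hez0.symm, hψ00, hψ0]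
    · simp only [hφ, ↓reduceIte]; exact hψ10
    · simp only [hφ, hnez.symm, ↓reduceIte]; exact hψ01
    · simp only [hφ, heze, hezz, ↓reduceIte]; exact hψ11
  have hcomp : ∀ (x : R) (a b : ZMod 2), (if a + b = 1 then x else 0)
      = (if a = 1 then x else 0) + (if b = 1 then x else 0) := by
    intro x a b
    rcases (show ∀ a : ZMod 2, a = 0 ∨ a = 1 by decide) a with rfl | rfl <;>
      rcases (show ∀ a : ZMod 2, a = 0 ∨ a = 1 by decide) b with rfl | rfl <;>
      norm_num [show (1:ZMod 2) + 1 = 0 from rfl]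
    exact (char2 x).symm
  have hmul : ∀ (x y : R) (a b : ZMod 2), (if a = 1 then x else 0) * (if b = 1 then y else 0)
      = (if a * b = 1 then x * y else 0) := by
    intro x y a b
    rcases (show ∀ a : ZMod 2, a = 0 ∨ a = 1 by decide) a with rfl | rfl <;>
      rcases (show ∀ a : ZMod 2, a = 0 ∨ a = 1 by decide) b with rfl | rfl <;>
      norm_num
  have map_add : ∀ u v : Fring, ψ (u + v) = ψ u + ψ v := by
    intro u v
    have h1 : (u + v).1 = u.1 + v.1 := rfl
    have h2 : (u + v).2 = u.2 + v.2 := rfl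
    simp only [hψ, h1, h2, hcomp]
    abel
  have map_mul : ∀ u v : Fring, ψ (u * v) = ψ u * ψ v := by
    intro u v
    have h1 : (u * v).1 = u.1 * v.1 := rfl
    have h2 : (u * v).2 = u.1 * v.2 := rfl
    simp only [hψ, h1, h2, mul_add, add_mul, hmul, hee, hez, hze, hzz, ite_self,
      add_zero, zero_add]
  exact ⟨(RingEquiv.mk ⟨ψ, φ, left_inv, right_inv⟩ map_mul map_add).symm⟩


end build

/-- Theorem D(i): for even `n`, `γₛ(Γ(R)) = n - 1` iff `R ≅ E` or `R ≅ F`. -/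
theorem stmt_5 (R : Type*) [NonUnitalRing R] [Fintype R] (n : ℕ)
    (hcard : Fintype.card R = n) (hn : Even n)
    (hnc : ∃ x y : R, x * y ≠ y * x)
    (hz : Set.center R = {0}) :
    (commutingGraph R).signedDominationNumber = (n : ℤ) - 1 ↔
      (Nonempty (R ≃+* Ering) ∨ Nonempty (R ≃+* Fring)) := by
  have hvset : ∀ x : R, x ∉ Set.center R ↔ ¬ (x = 0) := by
    intro x; rw [hz]; simp
  have hn1 : 1 ≤ n := by
    rw [← hcard]
    exact Fintype.card_pos
  have hcardV : Fintype.card {x : R // x ∉ Set.center R} = n - 1 := by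
    rw [Fintype.card_congr (Equiv.subtypeEquivRight hvset),
      Fintype.card_subtype_compl, Fintype.card_subtype_eq, hcard]
  constructor
  · intro hγ
    have hcent2 : ∀ x y : R, x ≠ 0 → y ≠ 0 → x * y = y * x → x = y := by
      by_contra hc
      push_neg at hc
      obtain ⟨x, y, hx0, hy0, hcomm, hxy⟩ := hc
      have hv₀ : ∃ v₀ : R, v₀ ≠ 0 ∧ ∀ v : R, v ≠ 0 → v * v₀ = v₀ * v →
          ∃ a b c : R, a ≠ 0 ∧ b ≠ 0 ∧ c ≠ 0 ∧ a ≠ b ∧ a ≠ c ∧ b ≠ c ∧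
            a * v = v * a ∧ b * v = v * b ∧ c * v = v * c := by
        by_cases hchar : ∀ w : R, w + w = 0
        · have addeq : ∀ a b : R, a + b = 0 → a = b := by
            intro a b h
            have h2 : a = a + (b + b) := by rw [hchar b, add_zero]
            rw [← add_assoc, h, zero_add] at h2
            exact h2
          refine ⟨x, hx0, ?_⟩
          intro v hv0 hvx
          by_cases hveq : v = x
          · subst hveq
            refine ⟨v, y, v + y, hv0, hy0, fun h => hxy (addeq _ _ h), hxy,
              fun h => hy0 (by rwa [left_eq_add] at h),
              fun h => hv0 (by rwa [right_eq_add] at h),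
              rfl, hcomm.symm, ?_⟩
            rw [add_mul, mul_add, hcomm]
          · refine ⟨v, x, v + x, hv0, hx0, fun h => hveq (addeq _ _ h), hveq,
              fun h => hx0 (by rwa [left_eq_add] at h),
              fun h => hv0 (by rwa [right_eq_add] at h),
              rfl, hvx.symm, ?_⟩
            rw [add_mul, mul_add, hvx]
        · push_neg at hchar
          obtain ⟨w, hw⟩ := hchar
          obtain ⟨g, hg1, hg2, hg3⟩ : ∃ g : R, g ≠ 0 ∧ g + g ≠ 0 ∧ g + g + g ≠ 0 := by
            by_cases h3 : w + w + w = 0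
            · obtain ⟨t, ht⟩ := exists_prime_addOrderOf_dvd_card 2
                (by rw [hcard]; exact hn.two_dvd)
              have ht0 : t ≠ 0 := by
                intro h0
                rw [h0, addOrderOf_zero] at ht
                omega
              have ht2 : t + t = 0 := by
                have h4 := addOrderOf_nsmul_eq_zero t
                rw [ht, two_nsmul] at h4
                exact h4
              refine ⟨w + t, ?_, ?_, ?_⟩
              · intro h0
                apply hw
                have h5 : (w + t) + (w + t) = (w + w) + (t + t) := by abel
                rw [h0, add_zero, ht2, add_zero] at h5
                exact h5.symm
              · intro h0
                apply hw
                have h5 : (w + t) + (w + t) = (w + w) + (t + t) := by abel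
                rw [h0, ht2, add_zero] at h5
                exact h5.symm
              · intro h0
                apply ht0
                have h5 : (w + t) + (w + t) + (w + t)
                    = (w + w + w) + (t + t + (t + 0)) := by abel
                rw [h0, h3, ht2, zero_add, add_zero, zero_add] at h5
                exact h5.symm
            · refine ⟨w, ?_, hw, h3⟩
              intro h0
              exact hw (by rw [h0, add_zero])
          refine ⟨g, hg1, ?_⟩
          intro v hv0 hvg
          have c1 : g * v = v * g := hvg.symm
          have c2 : (g + g) * v = v * (g + g) := by rw [add_mul, mul_add, c1]
          have c3 : (g + g + g) * v = v * (g + g + g) := by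
            rw [add_mul, mul_add, c2, c1]
          have d12 : g ≠ g + g := fun h => hg1 (by rwa [right_eq_add] at h)
          have d13 : g ≠ g + g + g := by
            intro h
            apply hg2
            have h2 : g + g + g = 0 + g := by rw [zero_add, ← h]
            exact add_right_cancel h2
          have d23 : g + g ≠ g + g + g := fun h =>
            hg1 (by rwa [left_eq_add] at h)
          by_cases hvin : v = g ∨ v = g + g ∨ v = g + g + g
          · exact ⟨g, g + g, g + g + g, hg1, hg2, hg3, d12, d13, d23, c1, c2, c3⟩
          · push_neg at hvin
            exact ⟨v, g, g + g, hv0, hg1, hg2, hvin.1, hvin.2.1, d12, rfl, c1, c2⟩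
      obtain ⟨v₀, hv₀0, hv₀p⟩ := hv₀
      have hv₀nc : (v₀ : R) ∉ Set.center R := (hvset v₀).mpr hv₀0
      have hle := CGaux.sdn_le (commutingGraph R) ⟨v₀, hv₀nc⟩ ?_
      · rw [hγ, hcardV] at hle
        omega
      · intro v hv
        have hvv₀ : (v : R) * v₀ = v₀ * v := by
          rcases hv with ⟨hne, hcm⟩ | h
          · exact hcm
          · rw [← h]
        have hv0 : (v : R) ≠ 0 := (hvset _).mp v.2
        obtain ⟨a, b, c, ha0, hb0, hc0, hab, hac, hbc, hca, hcb, hcc⟩ :=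
          hv₀p v hv0 hvv₀
        have hanc : a ∉ Set.center R := (hvset a).mpr ha0
        have hbnc : b ∉ Set.center R := (hvset b).mpr hb0
        have hcnc : c ∉ Set.center R := (hvset c).mpr hc0
        have key : ∀ (d : R) (hd : d ∉ Set.center R), d * (v : R) = v * d →
            ((commutingGraph R).Adj v ⟨d, hd⟩ ∨ (⟨d, hd⟩ :
              {x : R // x ∉ Set.center R}) = v) := by
          intro d hd hcmd
          by_cases hdv : (⟨d, hd⟩ : {x : R // x ∉ Set.center R}) = v
          · right; exact hdv
          · left; exact ⟨fun h => hdv h.symm, hcmd.symm⟩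
        have h3 := CGaux.three_le_card_filter
          (fun u => (commutingGraph R).Adj v u ∨ u = v) ⟨a, hanc⟩ ⟨b, hbnc⟩ ⟨c, hcnc⟩
          (key a hanc hca) (key b hbnc hcb) (key c hcnc hcc)
          (fun h => hab (congrArg Subtype.val h))
          (fun h => hac (congrArg Subtype.val h))
          (fun h => hbc (congrArg Subtype.val h))
        convert h3 using 2
        exact Finset.filter_congr_decidable _ _ _
    obtain ⟨e, z, he0, hz0, hee, hzz, char2, hcov, hpat⟩ :=
      structure_lemma hnc hcent2
    rcases hpat with ⟨hez, hze⟩ | ⟨hez, hze⟩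
    · exact Or.inr (build_equiv_F e z he0 hz0 hee hzz hez hze char2 hcov)
    · exact Or.inl (build_equiv_E e z he0 hz0 hee hzz hez hze char2 hcov)
  · rintro (hh | hh)
    · obtain ⟨φ⟩ := hh
      have hφ0 : φ (0 : R) = 0 := by
        have h := map_add φ 0 0
        rw [add_zero] at h
        exact (left_eq_add.mp h)
      have hinj : Function.Injective φ := φ.injective
      have Ecomm : ∀ a b : Ering, a ≠ 0 → b ≠ 0 → a ≠ b → a * b ≠ b * a := by decide
      have hempty : ∀ a b, ¬ (commutingGraph R).Adj a b := by
        rintro a b ⟨hne, hcm⟩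
        have ha0 : (a : R) ≠ 0 := (hvset _).mp a.2
        have hb0 : (b : R) ≠ 0 := (hvset _).mp b.2
        refine Ecomm (φ a) (φ b)
          (fun h => ha0 (hinj (by rw [h, hφ0])))
          (fun h => hb0 (hinj (by rw [h, hφ0])))
          (fun h => hne (Subtype.ext (hinj h))) ?_
        rw [← map_mul, ← map_mul, hcm]
      have hn4 : n = 4 := by
        rw [← hcard, Fintype.card_congr φ.toEquiv]
        decide
      rw [CGaux.sdn_empty (commutingGraph R) hempty, hcardV, hn4]
      decide
    · obtain ⟨φ⟩ := hh
      have hφ0 : φ (0 : R) = 0 := by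
        have h := map_add φ 0 0
        rw [add_zero] at h
        exact (left_eq_add.mp h)
      have hinj : Function.Injective φ := φ.injective
      have Fcomm : ∀ a b : Fring, a ≠ 0 → b ≠ 0 → a ≠ b → a * b ≠ b * a := by decide
      have hempty : ∀ a b, ¬ (commutingGraph R).Adj a b := by
        rintro a b ⟨hne, hcm⟩
        have ha0 : (a : R) ≠ 0 := (hvset _).mp a.2
        have hb0 : (b : R) ≠ 0 := (hvset _).mp b.2
        refine Fcomm (φ a) (φ b)
          (fun h => ha0 (hinj (by rw [h, hφ0])))
          (fun h => hb0 (hinj (by rw [h, hφ0])))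
          (fun h => hne (Subtype.ext (hinj h))) ?_
        rw [← map_mul, ← map_mul, hcm]
      have hn4 : n = 4 := by
        rw [← hcard, Fintype.card_congr φ.toEquiv]
        decide
      rw [CGaux.sdn_empty (commutingGraph R) hempty, hcardV, hn4]
      decide

end
end

section
/- Let R be a finite non-commutative ring of order n with Z(R) = {0}. If γ(Γ̄(R)) = 1, then n = 2^t for some positive integer t. -/
open scoped Classical

noncomputable section

/-- If `γ(Γ̄(R)) = 1` then `|R| = 2^t` for some positive integer `t`. -/
theorem stmt_11 (R : Type*) [NonUnitalRing R] [Fintype R] (n : ℕ)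
    (hcard : Fintype.card R = n)
    (hnc : ∃ x y : R, x * y ≠ y * x)
    (hz : Set.center R = {0})
    (h : ((commutingGraph R)ᶜ).dominationNumber = 1) :
    ∃ t : ℕ, 0 < t ∧ n = 2 ^ t := by
  classical
  subst hcard
  set G := (commutingGraph R)ᶜ with hG
  -- extract a dominating set of size one
  have hS : ∃ D : Finset {x : R // x ∉ Set.center R},
      G.IsDominatingSet D ∧ D.card = 1 := by
    have hne : {m | ∃ D : Finset {x : R // x ∉ Set.center R},
        G.IsDominatingSet D ∧ D.card = m}.Nonempty := by
      by_contra hc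
      rw [Set.not_nonempty_iff_eq_empty] at hc
      rw [SimpleGraph.dominationNumber, hc, Nat.sInf_empty] at h
      exact one_ne_zero h.symm
    have hmem := Nat.sInf_mem hne
    rw [SimpleGraph.dominationNumber] at h
    rw [h] at hmem
    exact hmem
  obtain ⟨D, hdom, hD1⟩ := hS
  obtain ⟨a, rfl⟩ := Finset.card_eq_one.mp hD1
  have ha0 : (a : R) ≠ 0 := by
    intro h0
    exact a.2 ((Set.ext_iff.mp hz (a : R)).mpr h0)
  set b : R := (a : R) with hb
  -- the key centralizer fact
  have key : ∀ x : R, b * x = x * b → x = 0 ∨ x = b := by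
    intro x hx
    by_contra hcon
    push_neg at hcon
    have hxc : x ∉ Set.center R := by
      rw [hz, Set.mem_singleton_iff]; exact hcon.1
    have hxa : (⟨x, hxc⟩ : {x : R // x ∉ Set.center R}) ∉ ({a} : Finset _) := by
      rw [Finset.mem_singleton]
      intro hxe
      exact hcon.2 (by rw [hb, ← hxe])
    obtain ⟨u, hu, hadj⟩ := hdom _ hxa
    rw [Finset.mem_singleton] at hu
    subst hu
    rw [hG, SimpleGraph.compl_adj] at hadj
    exact hadj.2 ⟨hadj.1, hx⟩
  -- 2a = 0
  have h2a : b + b = 0 := by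
    rcases key (b + b) (by rw [mul_add, add_mul]) with h' | h'
    · exact h'
    · exact absurd (add_eq_right.mp h') ha0
  -- every element satisfies 4x = 0
  have h4 : ∀ x : R, x + x + x + x = 0 := by
    intro x
    have h2x : x + x = 0 ∨ x + x = b := by
      apply key
      rw [mul_add, add_mul, ← add_mul, ← mul_add, h2a, zero_mul, mul_zero]
    have hre : x + x + x + x = (x + x) + (x + x) := by abel
    rcases h2x with h' | h'
    · rw [hre, h', add_zero]
    · rw [hre, h']; exact h2a
  -- hence R is a 2-group
  have hnt : Nontrivial R := ⟨⟨0, b, Ne.symm ha0⟩⟩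
  have hn1 : 1 < Fintype.card R := Fintype.one_lt_card
  have hprime : ∀ q : ℕ, q.Prime → q ∣ Fintype.card R → q = 2 := by
    intro q hq hdvd
    haveI : Fact q.Prime := ⟨hq⟩
    obtain ⟨x, hx⟩ := exists_prime_addOrderOf_dvd_card (G := R) q hdvd
    have h4x : (4 : ℕ) • x = 0 := by
      have : (4 : ℕ) • x = x + x + x + x := by
        rw [succ_nsmul, succ_nsmul, succ_nsmul, one_nsmul]
      rw [this]; exact h4 x
    have hdvd4 : q ∣ 4 := by
      rw [← hx]
      exact addOrderOf_dvd_of_nsmul_eq_zero h4x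
    have : q ∣ 2 := hq.dvd_of_dvd_pow
      (show q ∣ 2 ^ 2 by rw [show (2:ℕ) ^ 2 = 4 by norm_num]; exact hdvd4)
    exact (Nat.prime_dvd_prime_iff_eq hq Nat.prime_two).mp this
  have hne0 : Fintype.card R ≠ 0 := by omega
  have hpow := Nat.eq_prime_pow_of_unique_prime_dvd (p := 2) hne0
    (fun {q} hq hd => hprime q hq hd)
  refine ⟨(Fintype.card R).primeFactorsList.length, Nat.pos_of_ne_zero ?_, hpow⟩
  intro h0
  rw [h0, pow_zero] at hpow
  omega

end
end

section
/- Let R be a finite non-commutative ring of odd order n with Z(R) = {0} and 3 ∤ n. Then 3 < γ(Γ(R)) < (n-1)/2. -/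
open scoped Classical

noncomputable section

section Aux
variable {R : Type*} [NonUnitalRing R]

def myCtr (a : R) : AddSubgroup R where
  carrier := {y | a * y = y * a}
  zero_mem' := by simp
  add_mem' := by
    intro p q hp hq
    simp only [Set.mem_setOf_eq] at *
    rw [mul_add, add_mul, hp, hq]
  neg_mem' := by
    intro p hp
    simp only [Set.mem_setOf_eq] at *
    rw [mul_neg, neg_mul, hp]

lemma mem_myCtr {a y : R} : y ∈ myCtr a ↔ a * y = y * a := Iff.rfl

lemma mem_of_double_mem {G : Type*} [AddCommGroup G] [Fintype G]
    (hodd : Odd (Fintype.card G)) (B : AddSubgroup G) {a : G} (h : a + a ∈ B) : a ∈ B := by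
  have hd : addOrderOf a ∣ Fintype.card G := addOrderOf_dvd_card
  have ho : Odd (addOrderOf a) := hodd.of_dvd_nat hd
  obtain ⟨k, hk⟩ := ho
  have key : (k + 1) • (a + a) = a := by
    have h1 : (k + 1) • (a + a) = (2 * k + 2) • a := by
      rw [smul_add, ← add_nsmul]; ring_nf
    rw [h1]
    have h2 : (2 * k + 2) • a = (2 * k + 1) • a + a := by rw [← succ_nsmul]
    rw [h2, ← hk, addOrderOf_nsmul_eq_zero, zero_add]
  rw [← key]
  exact B.nsmul_mem h _

lemma exists_not_mem_pair {G : Type*} [AddCommGroup G] (B C : AddSubgroup G)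
    (hB : B ≠ ⊤) (hC : C ≠ ⊤) : ∃ a, a ∉ B ∧ a ∉ C := by
  by_contra hcon
  push_neg at hcon
  obtain ⟨u, hu⟩ : ∃ u, u ∉ B := by
    by_contra h; push_neg at h; exact hB (AddSubgroup.eq_top_iff' B |>.mpr h)
  obtain ⟨v, hv⟩ : ∃ v, v ∉ C := by
    by_contra h; push_neg at h; exact hC (AddSubgroup.eq_top_iff' C |>.mpr h)
  have huC : u ∈ C := hcon u hu
  have hvB : v ∈ B := by by_contra h; exact hv (hcon v h)
  rcases Classical.em (u + v ∈ B) with h | h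
  · exact hu (by simpa using B.sub_mem h hvB)
  · exact hv (by simpa using C.sub_mem (hcon _ h) huC)

lemma not_three_cover {G : Type*} [AddCommGroup G] [Fintype G]
    (hodd : Odd (Fintype.card G)) (A B C : AddSubgroup G)
    (hA : A ≠ ⊤) (hB : B ≠ ⊤) (hC : C ≠ ⊤)
    (hcov : ∀ x, x ∈ A ∨ x ∈ B ∨ x ∈ C) : False := by
  obtain ⟨a, haB, haC⟩ := exists_not_mem_pair B C hB hC
  have haA : a ∈ A := by rcases hcov a with h | h | h <;> tauto
  obtain ⟨b, hbA, hbC⟩ := exists_not_mem_pair A C hA hC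
  have hbB : b ∈ B := by rcases hcov b with h | h | h <;> tauto
  have hab : a + b ∈ C := by
    rcases hcov (a + b) with h | h | h
    · exact absurd (by simpa using A.sub_mem h haA) hbA
    · exact absurd (by simpa using B.sub_mem h hbB) haB
    · exact h
  have h2 : a + a ∈ B := by
    rcases hcov (a + (a + b)) with h | h | h
    · exact absurd (by simpa using A.sub_mem (A.sub_mem h haA) haA) hbA
    · have := B.sub_mem h hbB
      simpa [← add_assoc] using this
    · exact absurd (by simpa using C.sub_mem h hab) haC
  exact haB (mem_of_double_mem hodd B h2)

end Aux


/-- For odd `n` not divisible by `3`, `3 < γ(Γ(R)) < (n-1)/2`. -/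
theorem stmt_12 (R : Type*) [NonUnitalRing R] [Fintype R] (n : ℕ)
    (hcard : Fintype.card R = n) (hn : Odd n) (h3 : ¬ (3 ∣ n))
    (hnc : ∃ x y : R, x * y ≠ y * x)
    (hz : Set.center R = {0}) :
    3 < (commutingGraph R).dominationNumber ∧
      2 * (commutingGraph R).dominationNumber < n - 1 := by
  classical
  have hodd : Odd (Fintype.card R) := hcard ▸ hn
  have hncentral : ∀ y : R, y ∉ Set.center R ↔ y ≠ 0 := by
    intro y; rw [hz]; simp
  obtain ⟨x, y0, hxy⟩ := hnc
  have hx : x ∉ Set.center R := by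
    intro h
    exact hxy (Semigroup.mem_center_iff.mp h y0).symm
  have hx0 : x ≠ 0 := (hncentral x).mp hx
  have hy_ne_neg : ∀ y : R, y ≠ 0 → y ≠ -y := by
    intro y hy hcon
    have h2 : (2 : ℕ) • y = 0 := by
      rw [two_nsmul]
      nth_rewrite 2 [hcon]
      exact add_neg_cancel y
    have hdvd2 : addOrderOf y ∣ 2 := addOrderOf_dvd_of_nsmul_eq_zero h2
    have hdvdn : addOrderOf y ∣ n := hcard ▸ addOrderOf_dvd_card
    have hoy : Odd (addOrderOf y) := hn.of_dvd_nat hdvdn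
    have h1 : addOrderOf y = 1 := by
      have := Nat.le_of_dvd (by norm_num) hdvd2
      have h2' := Nat.odd_iff.mp hoy
      interval_cases (addOrderOf y) <;> omega
    exact hy (AddMonoid.addOrderOf_eq_one_iff.mp h1)
  -- the domination number is achieved
  have hne : {m | ∃ D : Finset {z : R // z ∉ Set.center R},
      (commutingGraph R).IsDominatingSet D ∧ D.card = m}.Nonempty :=
    ⟨Finset.univ.card, Finset.univ, fun v hv => absurd (Finset.mem_univ v) hv, rfl⟩
  obtain ⟨D, hDdom, hDcard⟩ : ∃ D : Finset {z : R // z ∉ Set.center R},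
      (commutingGraph R).IsDominatingSet D ∧ D.card = (commutingGraph R).dominationNumber :=
    Nat.sInf_mem hne
  -- LOWER BOUND
  have hlow : 4 ≤ D.card := by
    by_contra hcon
    push_neg at hcon
    have hDne : D.Nonempty := by
      by_contra hemp
      rw [Finset.not_nonempty_iff_eq_empty] at hemp
      obtain ⟨u, hu, -⟩ := hDdom ⟨x, hx⟩ (by simp [hemp])
      simp [hemp] at hu
    set E : Finset R := D.image Subtype.val with hE
    have hEne : E.Nonempty := hDne.image _
    obtain ⟨a0, ha0⟩ := hEne
    have hEcard : E.card ≤ 3 := le_trans Finset.card_image_le (by omega)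
    have hproper : ∀ u ∈ E, myCtr u ≠ ⊤ := by
      intro u hu
      obtain ⟨v, hv, rfl⟩ := Finset.mem_image.mp hu
      intro htop
      apply v.2
      rw [Semigroup.mem_center_iff]
      intro g
      have hg : g ∈ myCtr (v : R) := htop ▸ AddSubgroup.mem_top g
      exact (mem_myCtr.mp hg).symm
    have hcov : ∀ y : R, ∃ u ∈ E, y ∈ myCtr u := by
      intro y
      rcases Classical.em (y = 0) with rfl | hy0
      · exact ⟨a0, ha0, (myCtr a0).zero_mem⟩
      · have hyc : y ∉ Set.center R := (hncentral y).mpr hy0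
        rcases Classical.em ((⟨y, hyc⟩ : {z : R // z ∉ Set.center R}) ∈ D) with hmem | hmem
        · exact ⟨y, Finset.mem_image.mpr ⟨⟨y, hyc⟩, hmem, rfl⟩, mem_myCtr.mpr rfl⟩
        · obtain ⟨u, hu, hadj⟩ := hDdom ⟨y, hyc⟩ hmem
          exact ⟨(u : R), Finset.mem_image.mpr ⟨u, hu, rfl⟩, mem_myCtr.mpr hadj.2⟩
    obtain ⟨a, b, c, haE, hbE, hcE, hsub⟩ :
        ∃ a b c, a ∈ E ∧ b ∈ E ∧ c ∈ E ∧ ∀ u ∈ E, u = a ∨ u = b ∨ u = c := by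
      have h1 : E.card = 1 ∨ E.card = 2 ∨ E.card = 3 := by
        have := Finset.card_pos.mpr ⟨a0, ha0⟩; omega
      rcases h1 with h | h | h
      · obtain ⟨a, ha⟩ := Finset.card_eq_one.mp h
        exact ⟨a, a, a, by simp [ha], by simp [ha], by simp [ha],
          by intro u hu; rw [ha] at hu; simp at hu; tauto⟩
      · obtain ⟨a, b, hab, ha⟩ := Finset.card_eq_two.mp h
        exact ⟨a, b, b, by simp [ha], by simp [ha], by simp [ha],
          by intro u hu; rw [ha] at hu; simp at hu; tauto⟩
      · obtain ⟨a, b, c, h1, h2', h3', ha⟩ := Finset.card_eq_three.mp h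
        exact ⟨a, b, c, by simp [ha], by simp [ha], by simp [ha],
          by intro u hu; rw [ha] at hu; simp at hu; tauto⟩
    refine not_three_cover hodd (myCtr a) (myCtr b) (myCtr c)
      (hproper a haE) (hproper b hbE) (hproper c hcE) ?_
    intro z
    obtain ⟨u, hu, hz'⟩ := hcov z
    rcases hsub u hu with rfl | rfl | rfl
    · exact Or.inl hz'
    · exact Or.inr (Or.inl hz')
    · exact Or.inr (Or.inr hz')
  -- UPPER BOUND
  set d := addOrderOf x with hdd
  have hddvd : d ∣ n := hcard ▸ addOrderOf_dvd_card
  have hd1 : d ≠ 1 := fun h => hx0 (AddMonoid.addOrderOf_eq_one_iff.mp h)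
  have hdodd : Odd d := hn.of_dvd_nat hddvd
  have hd3 : ¬ 3 ∣ d := fun h => h3 (h.trans hddvd)
  have hd5 : 5 ≤ d := by
    have h2 := Nat.odd_iff.mp hdodd
    have h3' : d % 3 ≠ 0 := fun h => hd3 (Nat.dvd_of_mod_eq_zero h)
    omega
  have hn1 : 1 ≤ n := hcard ▸ Fintype.card_pos
  have hdn : d ≤ n := Nat.le_of_dvd (by omega) hddvd
  set Z := AddSubgroup.zmultiples x with hZ
  have hZcard : Fintype.card Z = d := Fintype.card_zmultiples
  let e := Fintype.equivFin R
  set T : Finset R := Finset.univ.filter (fun y => y ∉ Z ∧ e y < e (-y)) with hT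
  set N : Finset R := Finset.univ.filter (fun y => y ∉ Z ∧ e (-y) < e y) with hN
  set S : Finset R := Finset.univ.filter (fun y => y ∉ Z) with hS
  have hScard : S.card + d = n := by
    have h1 : (Finset.univ.filter (fun y : R => y ∈ Z)).card = d := by
      rw [← hZcard, ← Fintype.card_subtype]
    have h2 := Finset.card_filter_add_card_filter_not
      (s := (Finset.univ : Finset R)) (p := fun y : R => y ∈ Z)
    rw [Finset.card_univ, hcard] at h2
    have h5 : S = Finset.univ.filter (fun a : R => ¬ a ∈ Z) := by
      ext z; simp [hS]
    rw [h5]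
    omega
  have hTN : T.card = N.card := by
    apply Finset.card_bij (fun y _ => -y)
    · intro y hy
      simp only [hT, hN, Finset.mem_filter, Finset.mem_univ, true_and] at hy ⊢
      refine ⟨fun hc => hy.1 (by simpa using Z.neg_mem hc), ?_⟩
      rw [neg_neg]
      exact hy.2
    · intro y1 h1 y2 h2 h; exact neg_injective h
    · intro z hzN
      refine ⟨-z, ?_, by rw [neg_neg]⟩
      simp only [hT, hN, Finset.mem_filter, Finset.mem_univ, true_and] at hzN ⊢
      refine ⟨fun hc => hzN.1 (by simpa using Z.neg_mem hc), ?_⟩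
      rw [neg_neg]
      exact hzN.2
  have hdisj : Disjoint T N := by
    rw [Finset.disjoint_left]
    intro y hyT hyN
    simp only [hT, hN, Finset.mem_filter, Finset.mem_univ, true_and] at hyT hyN
    exact absurd hyT.2 (not_lt.mpr (le_of_lt hyN.2))
  have hpart : T.card + N.card = S.card := by
    rw [← Finset.card_union_of_disjoint hdisj]
    congr 1
    ext y
    simp only [hT, hN, hS, Finset.mem_union, Finset.mem_filter, Finset.mem_univ, true_and]
    constructor
    · rintro (⟨h, -⟩ | ⟨h, -⟩) <;> exact h
    · intro hyZ
      have hy0 : y ≠ 0 := fun h => hyZ (h ▸ Z.zero_mem)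
      have hne' : e y ≠ e (-y) := fun h => hy_ne_neg y hy0 (e.injective h)
      rcases lt_or_gt_of_ne hne' with h | h
      · exact Or.inl ⟨hyZ, h⟩
      · exact Or.inr ⟨hyZ, h⟩
  -- the dominating set
  set D2 : Finset {z : R // z ∉ Set.center R} :=
    Finset.univ.filter (fun v => (v : R) = x ∨ (v : R) ∈ T) with hD2
  have hD2card : D2.card ≤ 1 + T.card := by
    have hle : D2.card ≤ (insert x T).card := by
      refine Finset.card_le_card_of_injOn
        (fun v : {z : R // z ∉ Set.center R} => (v : R)) ?_ ?_
      · intro v hv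
        simp only [Finset.mem_coe, hD2, Finset.mem_filter, Finset.mem_univ, true_and] at hv
        show (v : R) ∈ insert x T
        rcases hv with h | h
        · rw [h]; exact Finset.mem_insert_self _ _
        · exact Finset.mem_insert_of_mem h
      · intro v1 _ v2 _ h
        exact Subtype.ext h
    calc D2.card ≤ (insert x T).card := hle
      _ ≤ T.card + 1 := Finset.card_insert_le _ _
      _ = 1 + T.card := by omega
  have hD2dom : (commutingGraph R).IsDominatingSet D2 := by
    intro v hv
    simp only [hD2, Finset.mem_filter, Finset.mem_univ, true_and, not_or] at hv
    obtain ⟨hvx, hvT⟩ := hv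
    have hv0 : (v : R) ≠ 0 := (hncentral _).mp v.2
    rcases Classical.em ((v : R) ∈ Z) with hmem | hmem
    · refine ⟨⟨x, hx⟩, by simp [hD2], ?_, ?_⟩
      · intro h
        exact hvx (congrArg Subtype.val h).symm
      · obtain ⟨k, hk⟩ := AddSubgroup.mem_zmultiples_iff.mp hmem
        show x * (v : R) = (v : R) * x
        rw [← hk, mul_smul_comm, smul_mul_assoc]
    · have hnegT : -(v : R) ∈ T := by
        have hne' : e (v : R) ≠ e (-(v : R)) := fun h => hy_ne_neg _ hv0 (e.injective h)
        have hnotlt : ¬ e (v : R) < e (-(v : R)) := by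
          intro h
          apply hvT
          simp only [hT, Finset.mem_filter, Finset.mem_univ, true_and]
          exact ⟨hmem, h⟩
        simp only [hT, Finset.mem_filter, Finset.mem_univ, true_and]
        refine ⟨fun hc => hmem (by simpa using Z.neg_mem hc), ?_⟩
        rw [neg_neg]
        exact lt_of_le_of_ne (not_lt.mp hnotlt) (Ne.symm hne')
      have hnc2 : -(v : R) ∉ Set.center R := (hncentral _).mpr (neg_ne_zero.mpr hv0)
      refine ⟨⟨-(v : R), hnc2⟩, by simp [hD2, hnegT], ?_, ?_⟩
      · intro h
        exact hy_ne_neg (v : R) hv0 (congrArg Subtype.val h).symm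
      · show -(v : R) * (v : R) = (v : R) * -(v : R)
        rw [neg_mul, mul_neg]
  have hgle : (commutingGraph R).dominationNumber ≤ D2.card :=
    Nat.sInf_le ⟨D2, hD2dom, rfl⟩
  constructor
  · omega
  · omega

end
end

section
/- Let R be a finite non-commutative ring of order n with Z(R) = {0}. Then γ(Γ̄(R)) < (n-1)/2. -/
open scoped Classical

noncomputable section

/-- `γ(Γ̄(R)) < (n-1)/2`. -/
theorem stmt_13 (R : Type*) [NonUnitalRing R] [Fintype R] (n : ℕ)
    (hcard : Fintype.card R = n)
    (hnc : ∃ x y : R, x * y ≠ y * x)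
    (hz : Set.center R = {0}) :
    2 * ((commutingGraph R)ᶜ).dominationNumber < n - 1 := by
  classical
  obtain ⟨x, y, hxy⟩ := hnc
  have hx0 : x ≠ 0 := by
    rintro rfl; simp at hxy
  have hxc : x ∉ Set.center R := by
    rw [hz]; simpa using hx0
  -- the additive centralizer of x
  set H : AddSubgroup R :=
    { carrier := {v | v * x = x * v}
      zero_mem' := by simp
      add_mem' := by
        intro a b ha hb
        simp only [Set.mem_setOf_eq] at *
        rw [add_mul, mul_add, ha, hb]
      neg_mem' := by
        intro a ha
        simp only [Set.mem_setOf_eq] at *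
        rw [neg_mul, mul_neg, ha] } with hHdef
  have hmemH : ∀ v : R, v ∈ H ↔ v * x = x * v := fun v => Iff.rfl
  have hxH : x ∈ H := rfl
  have hyH : y ∉ H := fun h => hxy ((hmemH y).mp h).symm
  have hHne : H ≠ ⊤ := fun h => hyH (h ▸ AddSubgroup.mem_top y)
  have hidx : 2 ≤ H.index := by
    have h0 : H.index ≠ 0 := AddSubgroup.index_ne_zero_of_finite
    have h1 : H.index ≠ 1 := fun h => hHne (AddSubgroup.index_eq_one.mp h)
    omega
  have hcardH : 2 * Nat.card H ≤ n := by
    have hmi : Nat.card H * H.index = Nat.card R := AddSubgroup.card_mul_index H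
    have hnR : Nat.card R = n := by rw [Nat.card_eq_fintype_card, hcard]
    nlinarith [Nat.card_pos (α := H)]
  -- the Finset version of H
  set S : Finset R := Finset.univ.filter (fun v => v ∈ H) with hSdef
  have hScard : S.card = Nat.card H := by
    rw [Nat.card_eq_fintype_card, Fintype.card_subtype]
  have hSmem : ∀ v : R, v ∈ S ↔ v ∈ H := by
    intro v; simp [hSdef]
  have hS2 : 2 ≤ S.card := by
    have : ({0, x} : Finset R) ⊆ S := by
      intro v hv
      simp only [Finset.mem_insert, Finset.mem_singleton] at hv
      rw [hSmem]
      rcases hv with h | h <;> rw [h]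
      · exact H.zero_mem
      · exact hxH
    calc 2 = ({0, x} : Finset R).card := by rw [Finset.card_insert_of_notMem (by simpa using hx0.symm), Finset.card_singleton]
    _ ≤ S.card := Finset.card_le_card this
  -- the dominating set
  set D : Finset {v : R // v ∉ Set.center R} :=
    Finset.univ.filter (fun v => (v : R) ∈ H) with hDdef
  have hDmem : ∀ v : {v : R // v ∉ Set.center R}, v ∈ D ↔ (v : R) ∈ H := by
    intro v; simp [hDdef]
  have hdom : ((commutingGraph R)ᶜ).IsDominatingSet D := by
    intro v hv
    refine ⟨⟨x, hxc⟩, (hDmem _).mpr hxH, ?_⟩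
    have hvH : (v : R) ∉ H := fun h => hv ((hDmem v).mpr h)
    have hvc : ¬ (v : R) * x = x * (v : R) := fun h => hvH ((hmemH _).mpr h)
    have hne : (⟨x, hxc⟩ : {v : R // v ∉ Set.center R}) ≠ v := by
      intro h
      apply hvH
      rw [← h]
      exact hxH
    rw [SimpleGraph.compl_adj]
    refine ⟨hne, ?_⟩
    rintro ⟨-, h⟩
    exact hvc (by simpa using h.symm)
  -- card of D
  have hDcard : D.card ≤ S.card - 1 := by
    have hsub : D.card ≤ (S.erase 0).card := by
      refine Finset.card_le_card_of_injOn (fun v => (v : R)) ?_ ?_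
      · intro v hv
        refine Finset.mem_erase.mpr ⟨?_, (hSmem _).mpr ((hDmem v).mp hv)⟩
        intro h
        have h0c : (0:R) ∈ Set.center R := by rw [hz]; exact rfl
        have h' : (v : R) = 0 := h
        exact v.2 (h'.symm ▸ h0c)
      · intro a _ b _ h
        exact Subtype.ext h
    have : (S.erase 0).card = S.card - 1 :=
      Finset.card_erase_of_mem ((hSmem 0).mpr H.zero_mem)
    omega
  have hγ : ((commutingGraph R)ᶜ).dominationNumber ≤ D.card :=
    Nat.sInf_le ⟨D, hdom, rfl⟩
  omega

end
end
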